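/- arXiv:2409.19259 — 2 statements merged into one kernel-verified Lean document; each statement's English description precedes it below -/
import Mathlib

section
/- Let T > 0, θ > 0, and let a:[0,T)→ℝ be continuous with a(t) > 0 for all t∈[0,T) and limsup_{t↑T} a(t)/(θ√(T−t)) < 1. Then the backward ODE (♦) admits a maximal positive solution Ȳ (a positive solution with Ȳ(t) ≥ Y(t) for all t and every positive solution Y). Moreover, a function Y is a positive solution to the backward ODE (♦) if and only if there exists η ∈ (0, Ȳ(0)] such that Y solves the forward initial-value problem Y'(t) = −f(t,Y(t)) for t∈[0,T) with Y(0) = η; and for each such η this forward problem has a unique solution. -/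
open MeasureTheory Set Filter Topology

/-- Absolute continuity of `Y` on the interval `[a,b]` (classical ε–δ definition over
finite families of non-overlapping subintervals). -/
def AbsContOn (Y : ℝ → ℝ) (a b : ℝ) : Prop :=
  ∀ ε > (0:ℝ), ∃ δ > (0:ℝ), ∀ n : ℕ, ∀ I : Fin n → ℝ × ℝ,
    (∀ i, a ≤ (I i).1 ∧ (I i).1 ≤ (I i).2 ∧ (I i).2 ≤ b) →
    (∀ i j, i ≠ j → Disjoint (Set.Ioo (I i).1 (I i).2) (Set.Ioo (I j).1 (I j).2)) →
    (∑ i, ((I i).2 - (I i).1)) < δ →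
    (∑ i, |Y (I i).2 - Y (I i).1|) < ε

/-- The right-hand side `f(t,y) = θ² y/(√y + a(t))²` for `y>0`, with
`f(t,0) = θ²` if `a(t)=0` and `f(t,0) = 0` otherwise. -/
noncomputable def fODE (θ : ℝ) (a : ℝ → ℝ) (t y : ℝ) : ℝ :=
  if 0 < y then θ ^ 2 * y / (Real.sqrt y + a t) ^ 2
  else if a t = 0 then θ ^ 2 else 0

/-- A solution to the backward ODE (♦): `Y : [0,T] → [0,∞)` absolutely continuous,
right-differentiable on `[0,T)` with right-continuous right derivative,
`Y'₊(t) = −f(t,Y(t))` on `[0,T)`, and `Y(T) = 0`. -/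
def DiamondSol (T θ : ℝ) (a : ℝ → ℝ) (Y : ℝ → ℝ) : Prop :=
  (∀ t ∈ Set.Icc 0 T, 0 ≤ Y t) ∧
  AbsContOn Y 0 T ∧
  (∀ t ∈ Set.Ico 0 T, HasDerivWithinAt Y (-(fODE θ a t (Y t))) (Set.Ici t) t) ∧
  (∀ t ∈ Set.Ico 0 T,
      ContinuousWithinAt (fun s => fODE θ a s (Y s)) (Set.Ico t T) t) ∧
  Y T = 0

/-- A solution in `C([0,T]) ∩ C¹([0,T))` of the forward initial-value problem
`Y'(t) = −f(t,Y(t))` on `[0,T)`, `Y(0) = η`, with values in `[0,∞)`. -/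
noncomputable def ForwardSol (T θ : ℝ) (a : ℝ → ℝ) (η : ℝ) (Y : ℝ → ℝ) : Prop :=
  ContinuousOn Y (Set.Icc 0 T) ∧ (∀ t ∈ Set.Icc 0 T, 0 ≤ Y t) ∧ Y 0 = η ∧
    ∀ t ∈ Set.Ico 0 T, HasDerivWithinAt Y (-(fODE θ a t (Y t))) (Set.Ico 0 T) t

namespace S11
variable {T θ : ℝ} {a : ℝ → ℝ} {t y y₁ y₂ : ℝ}

lemma fODE_of_pos (hy : 0 < y) :
    fODE θ a t y = θ ^ 2 * y / (Real.sqrt y + a t) ^ 2 := if_pos hy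

lemma fODE_of_nonpos (hy : ¬ 0 < y) (ha : 0 < a t) : fODE θ a t y = 0 := by
  rw [fODE, if_neg hy, if_neg ha.ne']

lemma fODE_nonneg (ha : 0 < a t) : 0 ≤ fODE θ a t y := by
  by_cases hy : 0 < y
  · rw [fODE_of_pos hy]
    exact div_nonneg (by positivity) (sq_nonneg _)
  · rw [fODE_of_nonpos hy ha]

lemma fODE_le_sq (ha : 0 < a t) : fODE θ a t y ≤ θ ^ 2 := by
  by_cases hy : 0 < y
  · rw [fODE_of_pos hy]
    have hs : 0 ≤ Real.sqrt y := Real.sqrt_nonneg y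
    have hys : Real.sqrt y ^ 2 = y := Real.sq_sqrt hy.le
    have h0 : 0 < Real.sqrt y + a t := by linarith
    rw [div_le_iff₀ (by positivity)]
    nlinarith [sq_nonneg θ, mul_nonneg (mul_nonneg (sq_nonneg θ) hs) ha.le,
      mul_nonneg (sq_nonneg θ) (sq_nonneg (a t))]
  · rw [fODE_of_nonpos hy ha]; positivity

lemma fODE_le_lin (ha : 0 < a t) (hy : 0 ≤ y) : fODE θ a t y ≤ θ ^ 2 / a t ^ 2 * y := by
  rcases hy.lt_or_eq with hy' | hy'
  · rw [fODE_of_pos hy', div_mul_eq_mul_div]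
    have hs : 0 ≤ Real.sqrt y := Real.sqrt_nonneg y
    have hle : a t ^ 2 ≤ (Real.sqrt y + a t) ^ 2 := by nlinarith
    exact div_le_div_of_nonneg_left (by positivity) (by positivity) hle
  · rw [fODE_of_nonpos (by rw [← hy']; exact lt_irrefl 0) ha, ← hy']
    simp


-- core two-variable estimate
lemma fODE_mono_le (ha : 0 < a t) (h2 : 0 < y₂) (h12 : y₂ ≤ y₁) :
    fODE θ a t y₂ ≤ fODE θ a t y₁ ∧
      fODE θ a t y₁ - fODE θ a t y₂ ≤ θ ^ 2 / a t ^ 2 * (y₁ - y₂) := by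
  have h1 : 0 < y₁ := h2.trans_le h12
  rw [fODE_of_pos h1, fODE_of_pos h2]
  set A := a t with hA
  set u := Real.sqrt y₁ with hu
  set v := Real.sqrt y₂ with hv
  have hu0 : 0 < u := Real.sqrt_pos.2 h1
  have hv0 : 0 < v := Real.sqrt_pos.2 h2
  have huv : v ≤ u := Real.sqrt_le_sqrt h12
  have hy1 : u ^ 2 = y₁ := Real.sq_sqrt h1.le
  have hy2 : v ^ 2 = y₂ := Real.sq_sqrt h2.le
  have hdu : 0 < (u + A) ^ 2 := by positivity
  have hdv : 0 < (v + A) ^ 2 := by positivity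
  have hA2 : 0 < A ^ 2 := by positivity
  have claim1 : v * (u + A) ≤ u * (v + A) := by nlinarith [mul_le_mul_of_nonneg_right huv ha.le]
  have claimsq : (v * (u + A)) ^ 2 ≤ (u * (v + A)) ^ 2 :=
    pow_le_pow_left₀ (mul_nonneg hv0.le (by linarith)) claim1 2
  have key : A ^ 3 * (2 * (u * v) + A * u + A * v) ≤ (u + v) * ((u + A) ^ 2 * (v + A) ^ 2) := by
    have hid : (u + v) * ((u + A) ^ 2 * (v + A) ^ 2) - A ^ 3 * (2 * (u * v) + A * u + A * v)
        = (u + v) * (u * v) ^ 2 + A ^ 2 * (u + v) ^ 3 + 2 * A * (u * v) * (u + v) ^ 2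
          + 2 * A ^ 2 * (u * v) * (u + v) + 2 * A ^ 3 * (u ^ 2 + v ^ 2 + u * v) := by ring
    have n1 : (0:ℝ) ≤ (u + v) * (u * v) ^ 2 := mul_nonneg (by linarith) (sq_nonneg _)
    have n2 : (0:ℝ) ≤ A ^ 2 * (u + v) ^ 3 := mul_nonneg (sq_nonneg _) (pow_nonneg (by linarith) 3)
    have n3 : (0:ℝ) ≤ 2 * A * (u * v) * (u + v) ^ 2 :=
      mul_nonneg (mul_nonneg (by linarith) (mul_nonneg hu0.le hv0.le)) (sq_nonneg _)
    have n4 : (0:ℝ) ≤ 2 * A ^ 2 * (u * v) * (u + v) :=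
      mul_nonneg (mul_nonneg (by positivity) (mul_nonneg hu0.le hv0.le)) (by linarith)
    have n5 : (0:ℝ) ≤ 2 * A ^ 3 * (u ^ 2 + v ^ 2 + u * v) :=
      mul_nonneg (by positivity) (by nlinarith)
    linarith
  constructor
  · rw [div_le_div_iff₀ hdv hdu, ← hy1, ← hy2]
    nlinarith [mul_le_mul_of_nonneg_left claimsq (sq_nonneg θ)]
  · rw [div_sub_div _ _ hdu.ne' hdv.ne', div_mul_eq_mul_div, div_le_div_iff₀ (by positivity) hA2,
      ← hy1, ← hy2]
    have base : (u ^ 2 * (v + A) ^ 2 - v ^ 2 * (u + A) ^ 2) * A ^ 2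
        ≤ (u ^ 2 - v ^ 2) * ((u + A) ^ 2 * (v + A) ^ 2) := by
      have e1 : (u ^ 2 * (v + A) ^ 2 - v ^ 2 * (u + A) ^ 2) * A ^ 2
          = (u - v) * (A ^ 3 * (2 * (u * v) + A * u + A * v)) := by ring
      have e2 : (u ^ 2 - v ^ 2) * ((u + A) ^ 2 * (v + A) ^ 2)
          = (u - v) * ((u + v) * ((u + A) ^ 2 * (v + A) ^ 2)) := by ring
      rw [e1, e2]
      exact mul_le_mul_of_nonneg_left key (by linarith)
    nlinarith [mul_le_mul_of_nonneg_left base (sq_nonneg θ)]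


lemma fODE_lip (ha : 0 < a t) (y₁ y₂ : ℝ) :
    |fODE θ a t y₁ - fODE θ a t y₂| ≤ θ ^ 2 / a t ^ 2 * |y₁ - y₂| := by
  have hL : (0:ℝ) ≤ θ ^ 2 / a t ^ 2 := by positivity
  wlog h : y₂ ≤ y₁ generalizing y₁ y₂
  · rw [abs_sub_comm, abs_sub_comm y₁]
    exact this y₂ y₁ (le_of_not_ge h)
  have habs : |y₁ - y₂| = y₁ - y₂ := abs_of_nonneg (by linarith)
  rw [habs]
  by_cases h1 : 0 < y₁
  · by_cases h2 : 0 < y₂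
    · obtain ⟨hm, hl⟩ := fODE_mono_le ha h2 h
      rw [abs_of_nonneg (by linarith)]
      exact hl
    · rw [fODE_of_nonpos h2 ha, sub_zero, abs_of_nonneg (fODE_nonneg ha)]
      have hy2 : y₂ ≤ 0 := not_lt.1 h2
      calc fODE θ a t y₁ ≤ θ ^ 2 / a t ^ 2 * y₁ := fODE_le_lin ha h1.le
        _ ≤ θ ^ 2 / a t ^ 2 * (y₁ - y₂) := by nlinarith
  · rw [fODE_of_nonpos h1 ha, fODE_of_nonpos (fun hc => h1 (lt_of_lt_of_le hc h)) ha]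
    simpa using mul_nonneg hL (by linarith : (0:ℝ) ≤ y₁ - y₂)
/-! ### Continuity and derivative-transfer helpers -/

lemma fODE_contOn_t (hac : ContinuousOn a (Ico 0 T)) (hapos : ∀ t ∈ Ico 0 T, 0 < a t)
    {s : Set ℝ} (hs : s ⊆ Ico 0 T) (x : ℝ) :
    ContinuousOn (fun t => fODE θ a t x) s := by
  by_cases hx : 0 < x
  · refine ContinuousOn.congr ?_ (fun t _ => fODE_of_pos (θ := θ) (a := a) hx)
    refine ContinuousOn.div continuousOn_const ((continuousOn_const.add (hac.mono hs)).pow 2) ?_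
    intro t ht
    have h1 := hapos t (hs ht)
    have h0 : 0 < Real.sqrt x + a t := add_pos_of_nonneg_of_pos (Real.sqrt_nonneg x) h1
    exact (pow_pos h0 2).ne'
  · exact continuousOn_const.congr (fun t ht => fODE_of_nonpos hx (hapos t (hs ht)))

lemma fODE_comp_contOn (hac : ContinuousOn a (Ico 0 T)) (hapos : ∀ t ∈ Ico 0 T, 0 < a t)
    {Y : ℝ → ℝ} {s : Set ℝ} (hs : s ⊆ Ico 0 T)
    (hY : ContinuousOn Y s) (hpos : ∀ t ∈ s, 0 < Y t) :
    ContinuousOn (fun t => fODE θ a t (Y t)) s := by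
  refine ContinuousOn.congr ?_ (fun t ht => fODE_of_pos (hpos t ht))
  refine ContinuousOn.div (continuousOn_const.mul hY)
    (((Real.continuous_sqrt.comp_continuousOn hY).add (hac.mono hs)).pow 2) ?_
  intro t ht
  have h1 := hapos t (hs ht)
  have h0 : 0 < Real.sqrt (Y t) + a t := add_pos_of_nonneg_of_pos (Real.sqrt_nonneg _) h1
  exact (pow_pos h0 2).ne'

lemma hdw_Ici_of_Ico {Y : ℝ → ℝ} {d t : ℝ} (ht0 : 0 ≤ t) (htT : t < T)
    (h : HasDerivWithinAt Y d (Ico 0 T) t) : HasDerivWithinAt Y d (Ici t) t := by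
  apply h.mono_of_mem_nhdsWithin
  have h1 : Ici t ∩ Iio T ∈ 𝓝[Ici t] t := inter_mem_nhdsWithin _ (Iio_mem_nhds htT)
  exact mem_of_superset h1 (fun x hx => ⟨ht0.trans hx.1, hx.2⟩)

lemma hdw_Ici_of_Icc {Y : ℝ → ℝ} {d u K t : ℝ} (hu : u ≤ t) (ht : t < K)
    (h : HasDerivWithinAt Y d (Icc u K) t) : HasDerivWithinAt Y d (Ici t) t := by
  apply h.mono_of_mem_nhdsWithin
  have h1 : Ici t ∩ Iio K ∈ 𝓝[Ici t] t := inter_mem_nhdsWithin _ (Iio_mem_nhds ht)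
  exact mem_of_superset h1 (fun x hx => ⟨hu.trans hx.1, hx.2.le⟩)

lemma hdw_IcoT_of_Icc {Y : ℝ → ℝ} {d K t : ℝ} (hK : K < T) (ht : t < K)
    (h : HasDerivWithinAt Y d (Icc 0 K) t) : HasDerivWithinAt Y d (Ico 0 T) t := by
  apply h.mono_of_mem_nhdsWithin
  have h1 : Ico 0 T ∩ Iio K ∈ 𝓝[Ico 0 T] t := inter_mem_nhdsWithin _ (Iio_mem_nhds ht)
  exact mem_of_superset h1 (fun x hx => ⟨hx.1.1, hx.2.le⟩)

/-! ### One-sided limit helpers -/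

lemma le_at_right_of {g : ℝ → ℝ} {s u c : ℝ} (hsu : s < u)
    (hg : ContinuousWithinAt g (Icc s u) s) (h : ∀ r ∈ Ioc s u, g r ≤ c) : g s ≤ c := by
  have hne : (𝓝[Ioc s u] s).NeBot := by
    rw [← mem_closure_iff_nhdsWithin_neBot, closure_Ioc hsu.ne]
    exact ⟨le_refl s, hsu.le⟩
  have ht : Tendsto g (𝓝[Ioc s u] s) (𝓝 (g s)) :=
    hg.tendsto.mono_left (nhdsWithin_mono _ Ioc_subset_Icc_self)
  exact le_of_tendsto ht (eventually_mem_nhdsWithin.mono h)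

lemma ge_at_right_of {g : ℝ → ℝ} {s u c : ℝ} (hsu : s < u)
    (hg : ContinuousWithinAt g (Icc s u) s) (h : ∀ r ∈ Ioc s u, c ≤ g r) : c ≤ g s := by
  have h2 : -g s ≤ -c := le_at_right_of (g := fun r => -g r) hsu hg.neg
    (fun r hr => neg_le_neg (h r hr))
  linarith

lemma le_at_T (hT : 0 < T) {g : ℝ → ℝ} {s c : ℝ} (h0s : 0 ≤ s) (hsT : s < T)
    (hg : ContinuousWithinAt g (Icc 0 T) T) (h : ∀ r ∈ Ico s T, g r ≤ c) : g T ≤ c := by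
  have hne : (𝓝[Ico s T] T).NeBot := by
    rw [← mem_closure_iff_nhdsWithin_neBot, closure_Ico hsT.ne]
    exact ⟨hsT.le, le_refl T⟩
  have ht : Tendsto g (𝓝[Ico s T] T) (𝓝 (g T)) :=
    hg.tendsto.mono_left (nhdsWithin_mono _ (fun x hx => ⟨h0s.trans hx.1, hx.2.le⟩))
  exact le_of_tendsto ht (eventually_mem_nhdsWithin.mono h)

lemma ge_at_T (hT : 0 < T) {g : ℝ → ℝ} {s c : ℝ} (h0s : 0 ≤ s) (hsT : s < T)
    (hg : ContinuousWithinAt g (Icc 0 T) T) (h : ∀ r ∈ Ico s T, c ≤ g r) : c ≤ g T := by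
  have h2 : -g T ≤ -c := le_at_T hT (g := fun r => -g r) h0s hsT hg.neg
    (fun r hr => neg_le_neg (h r hr))
  linarith

/-! ### Right-derivative sign and monotonicity -/

lemma rderiv_nonneg {D : ℝ → ℝ} {d s t₁ : ℝ} (hst : s < t₁)
    (hd : HasDerivWithinAt D d (Ici s) s) (h : ∀ r ∈ Ioc s t₁, D s ≤ D r) : 0 ≤ d := by
  have ht : Tendsto (slope D s) (𝓝[>] s) (𝓝 d) := by
    have h1 := hasDerivWithinAt_iff_tendsto_slope.1 hd
    rwa [show Ici s \ {s} = Ioi s by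
      ext x; simp only [mem_diff, mem_Ici, mem_singleton_iff, mem_Ioi]
      exact ⟨fun h => lt_of_le_of_ne h.1 (Ne.symm h.2), fun h => ⟨h.le, h.ne'⟩⟩] at h1
  refine ge_of_tendsto ht ?_
  have hmem : Ioc s t₁ ∈ 𝓝[>] s := Ioc_mem_nhdsGT hst
  filter_upwards [hmem] with r hr
  rw [slope_def_field]
  exact div_nonneg (by linarith [h r hr]) (by linarith [hr.1])

lemma mono_of_rderiv_nonneg {W : ℝ → ℝ} {u v : ℝ}
    (hc : ContinuousOn W (Icc u v))
    (hd : ∀ x ∈ Ico u v, ∃ d, 0 ≤ d ∧ HasDerivWithinAt W d (Ici x) x) :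
    ∀ s ∈ Icc u v, ∀ t ∈ Icc u v, s ≤ t → W s ≤ W t := by
  intro s hs t ht hst
  choose g hg0 hgd using hd
  have key := le_gronwallBound_of_liminf_deriv_right_le (f := fun x => W s - W x)
    (f' := fun x => if h : x ∈ Ico u v then -g x h else 0) (δ := 0) (K := 0) (ε := 0)
    (a := s) (b := v)
    (continuousOn_const.sub (hc.mono (Icc_subset_Icc hs.1 le_rfl)))
    ?_ (by simp) ?_ t ⟨hst, ht.2⟩
  · rw [gronwallBound_ε0_δ0] at key
    have key2 : W s - W t ≤ 0 := key
    linarith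
  · intro x hx r hr
    have hx' : x ∈ Ico u v := ⟨hs.1.trans hx.1, hx.2⟩
    have hr' : -g x hx' < r := by
      have h3 : (if h : x ∈ Ico u v then -g x h else 0) < r := hr
      rwa [dif_pos hx'] at h3
    have hD : HasDerivWithinAt (fun y => W s - W y) (-g x hx') (Ici x) x :=
      (hgd x hx').const_sub _
    exact hD.liminf_right_slope_le hr' 
  · intro x hx
    have hx' : x ∈ Ico u v := ⟨hs.1.trans hx.1, hx.2⟩
    show (if h : x ∈ Ico u v then -g x h else 0) ≤ 0 * (W s - W x) + 0
    rw [dif_pos hx']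
    linarith [hg0 x hx']
/-! ### Grönwall estimates -/

lemma a_min (hT : 0 < T) (hac : ContinuousOn a (Ico 0 T)) (hapos : ∀ t ∈ Ico 0 T, 0 < a t)
    {b : ℝ} (hb0 : 0 ≤ b) (hbT : b < T) : ∃ m, 0 < m ∧ ∀ t ∈ Icc 0 b, m ≤ a t := by
  have hsub : Icc 0 b ⊆ Ico 0 T := fun x hx => ⟨hx.1, lt_of_le_of_lt hx.2 hbT⟩
  obtain ⟨x, hx, hmin⟩ := isCompact_Icc.exists_isMinOn (nonempty_Icc.2 hb0) (hac.mono hsub)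
  exact ⟨a x, hapos x (hsub hx), fun t ht => hmin ht⟩

lemma gron (hapos : ∀ t ∈ Ico 0 T, 0 < a t) {Y₁ Y₂ : ℝ → ℝ} {t₀ b δ L : ℝ}
    (ht₀ : 0 ≤ t₀) (hb : b < T)
    (hc1 : ContinuousOn Y₁ (Icc t₀ b)) (hc2 : ContinuousOn Y₂ (Icc t₀ b))
    (hd1 : ∀ t ∈ Ico t₀ b, HasDerivWithinAt Y₁ (-(fODE θ a t (Y₁ t))) (Ici t) t)
    (hd2 : ∀ t ∈ Ico t₀ b, HasDerivWithinAt Y₂ (-(fODE θ a t (Y₂ t))) (Ici t) t)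
    (hδ : |Y₁ t₀ - Y₂ t₀| ≤ δ) (hL : ∀ t ∈ Ico t₀ b, θ ^ 2 / a t ^ 2 ≤ L) :
    ∀ t ∈ Icc t₀ b, |Y₁ t - Y₂ t| ≤ δ * Real.exp (L * (t - t₀)) := by
  intro t ht
  have key := norm_le_gronwallBound_of_norm_deriv_right_le (f := fun s => Y₁ s - Y₂ s)
    (f' := fun s => -(fODE θ a s (Y₁ s)) - -(fODE θ a s (Y₂ s))) (δ := δ) (K := L) (ε := 0)
    (a := t₀) (b := b) (hc1.sub hc2)
    (fun x hx => (hd1 x hx).sub (hd2 x hx)) (by simpa [Real.norm_eq_abs] using hδ) ?_ t ht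
  · rw [gronwallBound_ε0] at key
    simpa [Real.norm_eq_abs] using key
  · intro x hx
    have hax : 0 < a x := hapos x ⟨ht₀.trans hx.1, hx.2.trans hb⟩
    have hlip := fODE_lip (θ := θ) hax (Y₁ x) (Y₂ x)
    have hLx := hL x hx
    have habs : (0:ℝ) ≤ |Y₁ x - Y₂ x| := abs_nonneg _
    have e : -(fODE θ a x (Y₁ x)) - -(fODE θ a x (Y₂ x))
        = -(fODE θ a x (Y₁ x) - fODE θ a x (Y₂ x)) := by ring
    show ‖-(fODE θ a x (Y₁ x)) - -(fODE θ a x (Y₂ x))‖ ≤ L * ‖Y₁ x - Y₂ x‖ + 0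
    rw [e, Real.norm_eq_abs, Real.norm_eq_abs, abs_neg, add_zero]
    calc |fODE θ a x (Y₁ x) - fODE θ a x (Y₂ x)|
        ≤ θ ^ 2 / a x ^ 2 * |Y₁ x - Y₂ x| := hlip
      _ ≤ L * |Y₁ x - Y₂ x| := mul_le_mul_of_nonneg_right hLx habs

lemma gron_eq (hT : 0 < T) (hac : ContinuousOn a (Ico 0 T)) (hapos : ∀ t ∈ Ico 0 T, 0 < a t)
    {Y₁ Y₂ : ℝ → ℝ} {t₀ b : ℝ} (ht₀0 : 0 ≤ t₀) (hbT : b < T)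
    (hc1 : ContinuousOn Y₁ (Icc t₀ b)) (hc2 : ContinuousOn Y₂ (Icc t₀ b))
    (hd1 : ∀ x ∈ Ico t₀ b, HasDerivWithinAt Y₁ (-(fODE θ a x (Y₁ x))) (Ici x) x)
    (hd2 : ∀ x ∈ Ico t₀ b, HasDerivWithinAt Y₂ (-(fODE θ a x (Y₂ x))) (Ici x) x)
    (heq : Y₁ t₀ = Y₂ t₀) : ∀ t ∈ Icc t₀ b, Y₁ t = Y₂ t := by
  rcases le_or_gt t₀ b with hb0 | hb0
  · obtain ⟨m, hm0, hm⟩ := a_min hT hac hapos (ht₀0.trans hb0) hbT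
    intro t ht
    have hL : ∀ x ∈ Ico t₀ b, θ ^ 2 / a x ^ 2 ≤ θ ^ 2 / m ^ 2 := by
      intro x hx
      have hmx := hm x ⟨ht₀0.trans hx.1, hx.2.le⟩
      exact div_le_div_of_nonneg_left (sq_nonneg θ) (by positivity) (by nlinarith)
    have key := gron hapos ht₀0 hbT hc1 hc2 hd1 hd2
      (by rw [heq, sub_self, abs_zero]) hL t ht
    rw [zero_mul] at key
    have h2 := abs_nonneg (Y₁ t - Y₂ t)
    have h3 : |Y₁ t - Y₂ t| = 0 := le_antisymm key h2
    have h4 := abs_eq_zero.1 h3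
    linarith [h4]
  · intro t ht
    exact absurd (ht.1.trans ht.2) (not_le.2 hb0)

/-! ### Lemmas on forward solutions -/

lemma fs_deriv_Ici {η : ℝ} {Y : ℝ → ℝ} (h : ForwardSol T θ a η Y) {t : ℝ}
    (ht : t ∈ Ico 0 T) : HasDerivWithinAt Y (-(fODE θ a t (Y t))) (Ici t) t :=
  hdw_Ici_of_Ico ht.1 ht.2 (h.2.2.2 t ht)

lemma mono_Icc0T (hT : 0 < T) {W : ℝ → ℝ} (hc : ContinuousOn W (Icc 0 T))
    (hd : ∀ x ∈ Ico 0 T, ∃ d, 0 ≤ d ∧ HasDerivWithinAt W d (Ici x) x) :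
    ∀ s ∈ Icc 0 T, ∀ t ∈ Icc 0 T, s ≤ t → W s ≤ W t := by
  have hIco : ∀ s ∈ Icc 0 T, ∀ t, 0 ≤ t → t < T → s ≤ t → W s ≤ W t := by
    intro s hs t ht0 htT hst
    exact mono_of_rderiv_nonneg (hc.mono (Icc_subset_Icc le_rfl htT.le))
      (fun x hx => hd x ⟨hx.1, hx.2.trans htT⟩) s ⟨hs.1, hst⟩ t ⟨ht0, le_rfl⟩ hst
  intro s hs t ht hst
  rcases lt_or_eq_of_le ht.2 with htT | hteq
  · exact hIco s hs t ht.1 htT hst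
  rcases lt_or_eq_of_le hst with hsT | hseq
  · have hsT' : s < T := lt_of_lt_of_le hsT ht.2
    have ht' : T ∈ Icc (0:ℝ) T := right_mem_Icc.2 hT.le
    have := ge_at_T hT hs.1 hsT' (hc T ht') (fun r hr => hIco s hs r (hs.1.trans hr.1) hr.2 hr.1)
    rw [hteq]
    exact this
  · rw [hseq]

lemma forward_pos (hT : 0 < T) (hac : ContinuousOn a (Ico 0 T))
    (hapos : ∀ t ∈ Ico 0 T, 0 < a t) {η : ℝ} {Y : ℝ → ℝ}
    (h : ForwardSol T θ a η Y) (hη : 0 < η) : ∀ t ∈ Ico 0 T, 0 < Y t := by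
  intro t ht
  rcases eq_or_lt_of_le ht.1 with ht0 | ht0
  · rw [← ht0, h.2.2.1]; exact hη
  obtain ⟨m, hm0, hm⟩ := a_min hT hac hapos ht.1 ht.2
  obtain ⟨L, hL0, hLball⟩ : ∃ L, 0 ≤ L ∧ ∀ x ∈ Icc 0 t, θ ^ 2 / a x ^ 2 ≤ L := by
    refine ⟨θ ^ 2 / m ^ 2, by positivity, fun x hx => ?_⟩
    have hmx := hm x hx
    exact div_le_div_of_nonneg_left (sq_nonneg θ) (by positivity) (by nlinarith)
  have hsub : Icc 0 t ⊆ Icc 0 T := Icc_subset_Icc le_rfl ht.2.le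
  have hexpc : Continuous (fun s : ℝ => Real.exp (L * s)) :=
    Real.continuous_exp.comp (continuous_const.mul continuous_id)
  have hWc : ContinuousOn (fun s => Y s * Real.exp (L * s)) (Icc 0 t) :=
    (h.1.mono hsub).mul hexpc.continuousOn
  have hWmono := mono_of_rderiv_nonneg (W := fun s => Y s * Real.exp (L * s)) hWc ?_
    0 ⟨le_rfl, ht.1⟩ t ⟨ht.1, le_rfl⟩ ht.1
  · have hW0 : Y 0 * Real.exp (L * 0) = η := by
      rw [mul_zero, Real.exp_zero, mul_one, h.2.2.1]
    have hWt : η ≤ Y t * Real.exp (L * t) := by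
      calc η = Y 0 * Real.exp (L * 0) := hW0.symm
        _ ≤ Y t * Real.exp (L * t) := hWmono
    nlinarith [Real.exp_pos (L * t)]
  · intro x hx
    have hxT : x ∈ Ico 0 T := ⟨hx.1, hx.2.trans ht.2⟩
    have hax : 0 < a x := hapos x hxT
    have hYx : 0 ≤ Y x := h.2.1 x ⟨hx.1, hx.2.le.trans ht.2.le⟩
    have hYd := fs_deriv_Ici h hxT
    have hexp : HasDerivAt (fun s : ℝ => Real.exp (L * s)) (Real.exp (L * x) * (L * 1)) x :=
      (Real.hasDerivAt_exp (L * x)).comp x ((hasDerivAt_id x).const_mul L)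
    refine ⟨-(fODE θ a x (Y x)) * Real.exp (L * x) + Y x * (Real.exp (L * x) * (L * 1)), ?_, ?_⟩
    · have hlin : fODE θ a x (Y x) ≤ θ ^ 2 / a x ^ 2 * Y x := fODE_le_lin hax hYx
      have hLx : θ ^ 2 / a x ^ 2 ≤ L := hLball x ⟨hx.1, hx.2.le⟩
      have h5 : fODE θ a x (Y x) ≤ L * Y x :=
        hlin.trans (mul_le_mul_of_nonneg_right hLx hYx)
      have h6 := Real.exp_pos (L * x)
      have h7 : fODE θ a x (Y x) * Real.exp (L * x) ≤ L * Y x * Real.exp (L * x) :=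
        mul_le_mul_of_nonneg_right h5 h6.le
      nlinarith
    · exact hYd.mul hexp.hasDerivWithinAt

lemma forward_anti (hT : 0 < T) (hapos : ∀ t ∈ Ico 0 T, 0 < a t) {η : ℝ} {Y : ℝ → ℝ}
    (h : ForwardSol T θ a η Y) :
    ∀ s ∈ Icc 0 T, ∀ t ∈ Icc 0 T, s ≤ t → Y t ≤ Y s := by
  have key := mono_Icc0T hT (W := fun s => -Y s) (h.1.neg) ?_
  · intro s hs t ht hst
    have h2 := key s hs t ht hst
    simpa using h2
  · intro x hx
    refine ⟨fODE θ a x (Y x), fODE_nonneg (hapos x hx), ?_⟩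
    have := (fs_deriv_Ici h hx).neg
    rwa [neg_neg] at this

lemma forward_W_mono (hT : 0 < T) (hapos : ∀ t ∈ Ico 0 T, 0 < a t) {η : ℝ} {Y : ℝ → ℝ}
    (h : ForwardSol T θ a η Y) :
    ∀ s ∈ Icc 0 T, ∀ t ∈ Icc 0 T, s ≤ t → Y s + θ ^ 2 * s ≤ Y t + θ ^ 2 * t := by
  have key := mono_Icc0T hT (W := fun s => Y s + θ ^ 2 * s)
    (h.1.add (continuous_const.mul continuous_id).continuousOn) ?_
  · exact key
  · intro x hx
    refine ⟨-(fODE θ a x (Y x)) + θ ^ 2 * 1, ?_, ?_⟩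
    · have := fODE_le_sq (θ := θ) (y := Y x) (hapos x hx)
      linarith
    · exact (fs_deriv_Ici h hx).add ((hasDerivAt_id x).const_mul (θ ^ 2)).hasDerivWithinAt

lemma forward_lip (hT : 0 < T) (hapos : ∀ t ∈ Ico 0 T, 0 < a t) {η : ℝ} {Y : ℝ → ℝ}
    (h : ForwardSol T θ a η Y) :
    ∀ s ∈ Icc 0 T, ∀ t ∈ Icc 0 T, s ≤ t → |Y t - Y s| ≤ θ ^ 2 * (t - s) := by
  have hIco : ∀ s ∈ Icc 0 T, ∀ t, 0 ≤ t → t < T → s ≤ t → |Y t - Y s| ≤ θ ^ 2 * (t - s) := by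
    intro s hs t ht0 htT hst
    have key := norm_image_sub_le_of_norm_deriv_right_le_segment (f := Y)
      (f' := fun r => -(fODE θ a r (Y r))) (C := θ ^ 2) (a := s) (b := t)
      (h.1.mono (Icc_subset_Icc hs.1 htT.le)) ?_ ?_ t ⟨hst, le_rfl⟩
    · simpa [Real.norm_eq_abs] using key
    · intro r hr
      exact fs_deriv_Ici h ⟨hs.1.trans hr.1, hr.2.trans htT⟩
    · intro r hr
      have har := hapos r ⟨hs.1.trans hr.1, hr.2.trans htT⟩
      rw [Real.norm_eq_abs, abs_neg, abs_of_nonneg (fODE_nonneg har)]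
      exact fODE_le_sq har
  intro s hs t ht hst
  rcases lt_or_eq_of_le ht.2 with htT | hteq
  · exact hIco s hs t (hs.1.trans hst) htT hst
  replace hteq : T = t := hteq.symm
  subst hteq
  rcases lt_or_eq_of_le hst with hsT | hseq
  · have hg : ContinuousWithinAt (fun r => Y r - Y s) (Icc 0 T) T :=
      ((h.1.sub continuousOn_const) T ht)
    have h1 : Y T - Y s ≤ θ ^ 2 * (T - s) := by
      have := le_at_T hT (g := fun r => Y r - Y s - θ ^ 2 * (r - s)) hs.1 hsT
        ((hg.sub ((continuous_const.mul (continuous_id.sub continuous_const)).continuousOn T ht)))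
        (fun r hr => by
          have h1 := hIco s hs r (hs.1.trans hr.1) hr.2 hr.1
          have h2 := abs_le.1 h1
          show Y r - Y s - θ ^ 2 * (r - s) ≤ 0
          linarith [h2.2])
      have h2 : Y T - Y s - θ ^ 2 * (T - s) ≤ 0 := this
      linarith
    have h2 : Y s - Y T ≤ θ ^ 2 * (T - s) := by
      have := le_at_T hT (g := fun r => Y s - Y r - θ ^ 2 * (r - s)) hs.1 hsT
        (((continuousOn_const.sub h.1).sub
          (continuous_const.mul (continuous_id.sub continuous_const)).continuousOn) T ht)
        (fun r hr => by
          have h1 := hIco s hs r (hs.1.trans hr.1) hr.2 hr.1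
          have h2 := abs_le.1 h1
          show Y s - Y r - θ ^ 2 * (r - s) ≤ 0
          linarith [h2.1])
      have h2 : Y s - Y T - θ ^ 2 * (T - s) ≤ 0 := this
      linarith
    rw [abs_le]
    constructor <;> linarith
  · rw [hseq]
    simp

lemma forward_eq_from (hT : 0 < T) (hac : ContinuousOn a (Ico 0 T))
    (hapos : ∀ t ∈ Ico 0 T, 0 < a t) {Y₁ Y₂ : ℝ → ℝ} {η₁ η₂ t₀ : ℝ}
    (h1 : ForwardSol T θ a η₁ Y₁) (h2 : ForwardSol T θ a η₂ Y₂)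
    (ht₀ : t₀ ∈ Ico 0 T) (heq : Y₁ t₀ = Y₂ t₀) : ∀ t ∈ Icc t₀ T, Y₁ t = Y₂ t := by
  have hIco : ∀ t ∈ Ico t₀ T, Y₁ t = Y₂ t := by
    intro t ht
    rcases eq_or_lt_of_le ht.1 with rfl | htt
    · exact heq
    refine gron_eq hT hac hapos ht₀.1 ht.2
      (h1.1.mono (Icc_subset_Icc ht₀.1 ht.2.le)) (h2.1.mono (Icc_subset_Icc ht₀.1 ht.2.le))
      (fun x hx => fs_deriv_Ici h1 ⟨ht₀.1.trans hx.1, hx.2.trans ht.2⟩)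
      (fun x hx => fs_deriv_Ici h2 ⟨ht₀.1.trans hx.1, hx.2.trans ht.2⟩) heq t ⟨ht.1, le_rfl⟩
  intro t ht
  rcases lt_or_eq_of_le ht.2 with htT | hteq
  · exact hIco t ⟨ht.1, htT⟩
  replace hteq : T = t := hteq.symm
  subst hteq
  have hle : Y₁ T - Y₂ T ≤ 0 :=
    le_at_T hT ht₀.1 ht₀.2 ((h1.1.sub h2.1) T (right_mem_Icc.2 hT.le))
      (fun r hr => by
        show Y₁ r - Y₂ r ≤ 0
        rw [hIco r ⟨hr.1, hr.2⟩]; simp)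
  have hge : 0 ≤ Y₁ T - Y₂ T :=
    ge_at_T hT ht₀.1 ht₀.2 ((h1.1.sub h2.1) T (right_mem_Icc.2 hT.le))
      (fun r hr => by
        show 0 ≤ Y₁ r - Y₂ r
        rw [hIco r ⟨hr.1, hr.2⟩]; simp)
  linarith

lemma forward_comp (hT : 0 < T) (hac : ContinuousOn a (Ico 0 T))
    (hapos : ∀ t ∈ Ico 0 T, 0 < a t) {η₁ η₂ : ℝ} {Y₁ Y₂ : ℝ → ℝ}
    (h1 : ForwardSol T θ a η₁ Y₁) (h2 : ForwardSol T θ a η₂ Y₂) (hle : η₁ ≤ η₂) :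
    ∀ t ∈ Icc 0 T, Y₁ t ≤ Y₂ t := by
  have hIco : ∀ t ∈ Ico 0 T, Y₁ t ≤ Y₂ t := by
    intro t₁ ht₁
    by_contra hgt
    push_neg at hgt
    set A := {s ∈ Icc 0 t₁ | Y₁ s ≤ Y₂ s} with hA
    have hsubIcc : Icc 0 t₁ ⊆ Icc 0 T := Icc_subset_Icc le_rfl ht₁.2.le
    have hA0 : (0:ℝ) ∈ A := ⟨⟨le_rfl, ht₁.1⟩, by rw [h1.2.2.1, h2.2.2.1]; exact hle⟩
    have hsubA : A ⊆ Icc 0 t₁ := fun x hx => hx.1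
    have hclA : IsClosed A := by
      have hAeq : A = Icc 0 t₁ ∩ (fun s => Y₁ s - Y₂ s) ⁻¹' Iic 0 := by
        ext x
        simp only [hA, mem_sep_iff, mem_inter_iff, mem_preimage, mem_Iic, sub_nonpos]
      rw [hAeq]
      exact ContinuousOn.preimage_isClosed_of_isClosed
        ((h1.1.sub h2.1).mono hsubIcc) isClosed_Icc isClosed_Iic
    have hcompA : IsCompact A := isCompact_Icc.of_isClosed_subset hclA hsubA
    set s := sSup A with hs
    have hsA : s ∈ A := hcompA.sSup_mem ⟨0, hA0⟩
    have hst₁ : s < t₁ :=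
      lt_of_le_of_ne hsA.1.2 (fun hcon => by rw [hcon] at hsA; linarith [hsA.2])
    have hIoc : ∀ r ∈ Ioc s t₁, Y₂ r < Y₁ r := by
      intro r hr
      by_contra hge
      push_neg at hge
      have hrA : r ∈ A := ⟨⟨hsA.1.1.trans hr.1.le, hr.2⟩, hge⟩
      exact absurd (le_csSup hcompA.bddAbove hrA) (not_le.2 hr.1)
    have heqs : Y₁ s = Y₂ s := by
      refine le_antisymm hsA.2 ?_
      have hcw : ContinuousWithinAt (fun r => Y₂ r - Y₁ r) (Icc s t₁) s :=
        ((h2.1.sub h1.1).mono (Icc_subset_Icc hsA.1.1 ht₁.2.le)) s ⟨le_rfl, hst₁.le⟩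
      have hge := le_at_right_of (g := fun r => Y₂ r - Y₁ r) (c := 0) hst₁ hcw
        (fun r hr => by show Y₂ r - Y₁ r ≤ 0; linarith [hIoc r hr])
      have hge2 : Y₂ s - Y₁ s ≤ 0 := hge
      linarith
    have heqt := forward_eq_from hT hac hapos h1 h2 ⟨hsA.1.1, hst₁.trans ht₁.2⟩ heqs
      t₁ ⟨hst₁.le, ht₁.2.le⟩
    linarith
  intro t ht
  rcases lt_or_eq_of_le ht.2 with htT | hteq
  · exact hIco t ⟨ht.1, htT⟩
  replace hteq : T = t := hteq.symm
  subst hteq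
  have hle2 : Y₁ T - Y₂ T ≤ 0 :=
    le_at_T hT le_rfl hT ((h1.1.sub h2.1) T (right_mem_Icc.2 hT.le))
      (fun r hr => by show Y₁ r - Y₂ r ≤ 0; linarith [hIco r hr])
  linarith
/-! ### Absolute continuity -/

lemma lip_absCont {Y : ℝ → ℝ} (hθ : 0 < θ)
    (hlip : ∀ s ∈ Icc 0 T, ∀ t ∈ Icc 0 T, s ≤ t → |Y t - Y s| ≤ θ ^ 2 * (t - s)) :
    AbsContOn Y 0 T := by
  intro ε hε
  refine ⟨ε / θ ^ 2 / 2, by positivity, fun n I hI hdisj hsum => ?_⟩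
  have hbd : ∀ i, |Y (I i).2 - Y (I i).1| ≤ θ ^ 2 * ((I i).2 - (I i).1) := by
    intro i
    obtain ⟨h1, h2, h3⟩ := hI i
    exact hlip (I i).1 ⟨h1, by linarith⟩ (I i).2 ⟨by linarith, h3⟩ h2
  have hc : (∑ i, |Y (I i).2 - Y (I i).1|) ≤ θ ^ 2 * ∑ i, ((I i).2 - (I i).1) := by
    rw [Finset.mul_sum]
    exact Finset.sum_le_sum (fun i _ => hbd i)
  have h2 : θ ^ 2 * (∑ i, ((I i).2 - (I i).1)) < θ ^ 2 * (ε / θ ^ 2 / 2) :=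
    mul_lt_mul_of_pos_left hsum (by positivity)
  have h3 : θ ^ 2 * (ε / θ ^ 2 / 2) = ε / 2 := by
    field_simp
  linarith

lemma absCont_contOn {Y : ℝ → ℝ} (h : AbsContOn Y 0 T) : ContinuousOn Y (Icc 0 T) := by
  intro x hx
  rw [Metric.continuousWithinAt_iff]
  intro ε hε
  obtain ⟨δ, hδ, hprop⟩ := h (ε / 2) (by linarith)
  refine ⟨δ, hδ, fun {z} hz hdist => ?_⟩
  have key := hprop 1 (fun _ => (min z x, max z x)) ?_ ?_ ?_
  · rw [Fin.sum_univ_one] at key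
    have habs : |Y z - Y x| = |Y (max z x) - Y (min z x)| := by
      rcases le_total z x with hzx | hzx
      · rw [min_eq_left hzx, max_eq_right hzx, abs_sub_comm]
      · rw [min_eq_right hzx, max_eq_left hzx]
    rw [Real.dist_eq, habs]
    linarith
  · intro i
    refine ⟨le_min hz.1 hx.1, min_le_max, max_le hz.2 hx.2⟩
  · intro i j hij
    exact absurd (Subsingleton.elim i j) hij
  · rw [Fin.sum_univ_one]
    rw [Real.dist_eq] at hdist
    rcases le_total z x with hzx | hzx
    · rw [min_eq_left hzx, max_eq_right hzx]
      rw [abs_sub_comm] at hdist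
      calc x - z ≤ |x - z| := le_abs_self _
        _ < δ := hdist
    · rw [min_eq_right hzx, max_eq_left hzx]
      calc z - x ≤ |z - x| := le_abs_self _
        _ < δ := hdist

/-! ### Local existence via Picard–Lindelöf -/

lemma exists_sol_on (hT : 0 < T) (hac : ContinuousOn a (Ico 0 T))
    (hapos : ∀ t ∈ Ico 0 T, 0 < a t) {η K : ℝ} (hK0 : 0 ≤ K) (hKT : K < T) :
    ∃ F : ℝ → ℝ, F 0 = η ∧
      ∀ t ∈ Icc 0 K, HasDerivWithinAt F (-(fODE θ a t (F t))) (Icc 0 K) t := by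
  obtain ⟨m, hm0, hm⟩ := a_min hT hac hapos hK0 hKT
  have hsub : Icc 0 K ⊆ Ico 0 T := fun x hx => ⟨hx.1, lt_of_le_of_lt hx.2 hKT⟩
  set L : NNReal := ⟨θ ^ 2 / m ^ 2, by positivity⟩ with hLdef
  set Mb : NNReal := ⟨θ ^ 2, by positivity⟩ with hMbdef
  set R : NNReal := ⟨θ ^ 2 * K + 1, by positivity⟩ with hRdef
  have hpl : IsPicardLindelof (fun t x => -(fODE θ a t x)) (tmin := 0) (tmax := K)
      ⟨0, le_rfl, hK0⟩ η R 0 Mb L := by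
    refine ⟨?_, ?_, ?_, ?_⟩
    · intro t ht
      rw [lipschitzOnWith_iff_dist_le_mul]
      intro x _ z _
      have hat : 0 < a t := hapos t (hsub ht)
      have hmt := hm t ht
      rw [Real.dist_eq, Real.dist_eq]
      have e : -(fODE θ a t x) - -(fODE θ a t z) = -(fODE θ a t x - fODE θ a t z) := by ring
      rw [e, abs_neg]
      have hlip := fODE_lip (θ := θ) hat x z
      have hcoe : (L : ℝ) = θ ^ 2 / m ^ 2 := rfl
      rw [hcoe]
      refine hlip.trans (mul_le_mul_of_nonneg_right ?_ (abs_nonneg _))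
      exact div_le_div_of_nonneg_left (sq_nonneg θ) (by positivity) (by nlinarith)
    · intro x _
      exact (fODE_contOn_t hac hapos hsub x).neg
    · intro t ht x _
      have hat : 0 < a t := hapos t (hsub ht)
      rw [Real.norm_eq_abs, abs_neg, abs_of_nonneg (fODE_nonneg hat)]
      exact fODE_le_sq hat
    · have h1 : (Mb : ℝ) = θ ^ 2 := rfl
      have h2 : (R : ℝ) = θ ^ 2 * K + 1 := rfl
      have h3 : ((⟨0, le_rfl, hK0⟩ : Icc (0:ℝ) K) : ℝ) = 0 := rfl
      simp only [h1, h2, h3, NNReal.coe_zero, sub_zero, max_eq_left hK0]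
      nlinarith [sq_nonneg θ]
  obtain ⟨F, hF0, hFd⟩ := hpl.exists_eq_forall_mem_Icc_hasDerivWithinAt₀
  exact ⟨F, hF0, hFd⟩
/-! ### Global existence of the forward solution -/

lemma exists_forward (hT : 0 < T) (hθ : 0 < θ) (hac : ContinuousOn a (Ico 0 T))
    (hapos : ∀ t ∈ Ico 0 T, 0 < a t) {η : ℝ} (hη : 0 ≤ η) :
    ∃ Y, ForwardSol T θ a η Y := by
  classical
  -- cutoff sequence
  set K : ℕ → ℝ := fun n => T - T / (n + 2) with hKdef
  have hKn : ∀ n : ℕ, 0 ≤ K n ∧ K n < T := by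
    intro n
    have h2 : (1:ℝ) ≤ (n:ℝ) + 2 := by
      have := Nat.cast_nonneg (α := ℝ) n
      linarith
    have hpos : 0 < T / ((n:ℝ) + 2) := by positivity
    have hle : T / ((n:ℝ) + 2) ≤ T := div_le_self hT.le h2
    constructor
    · simp only [hKdef]; push_cast; linarith
    · simp only [hKdef]; push_cast; linarith
  have hidx : ∀ t : ℝ, t < T → ∃ n : ℕ, t ≤ K n := by
    intro t ht
    rcases le_or_gt t 0 with h0 | h0
    · exact ⟨0, h0.trans (hKn 0).1⟩
    · obtain ⟨n, hn⟩ := exists_nat_ge (T / (T - t))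
      refine ⟨n, ?_⟩
      have h1 : 0 < T - t := by linarith
      have h2 : T / (T - t) ≤ (n:ℝ) + 2 := hn.trans (by linarith)
      have h3 : T ≤ ((n:ℝ) + 2) * (T - t) := (div_le_iff₀ h1).1 h2
      have h4 : T / ((n:ℝ) + 2) ≤ T - t := by
        rw [div_le_iff₀ (by positivity)]
        nlinarith
      simp only [hKdef]; push_cast; linarith
  -- solutions on each piece
  choose F hF0 hFd using fun n : ℕ =>
    exists_sol_on (θ := θ) (η := η) hT hac hapos (hKn n).1 (hKn n).2
  have hFc : ∀ n, ContinuousOn (F n) (Icc 0 (K n)) :=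
    fun n t ht => (hFd n t ht).continuousWithinAt
  -- pairwise agreement
  have hagree : ∀ n m : ℕ, ∀ t, t ∈ Icc 0 (min (K n) (K m)) → F n t = F m t := by
    intro n m t ht
    have hminT : min (K n) (K m) < T := lt_of_le_of_lt (min_le_left _ _) (hKn n).2
    refine gron_eq hT hac hapos le_rfl hminT
      ((hFc n).mono (Icc_subset_Icc le_rfl (min_le_left _ _)))
      ((hFc m).mono (Icc_subset_Icc le_rfl (min_le_right _ _)))
      (fun x hx => hdw_Ici_of_Icc hx.1 (lt_of_lt_of_le hx.2 (min_le_left _ _))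
        (hFd n x ⟨hx.1, hx.2.le.trans (min_le_left _ _)⟩))
      (fun x hx => hdw_Ici_of_Icc hx.1 (lt_of_lt_of_le hx.2 (min_le_right _ _))
        (hFd m x ⟨hx.1, hx.2.le.trans (min_le_right _ _)⟩))
      (by rw [hF0 n, hF0 m]) t ht
  -- glued function on [0, T)
  set Y₀ : ℝ → ℝ := fun t => if h : t < T then F (Classical.choose (hidx t h)) t else 0 with hY₀def
  have hY₀F : ∀ n, ∀ t ∈ Icc 0 (K n), Y₀ t = F n t := by
    intro n t ht
    have htT : t < T := lt_of_le_of_lt ht.2 (hKn n).2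
    have hspec := Classical.choose_spec (hidx t htT)
    simp only [hY₀def, dif_pos htT]
    exact hagree _ n t ⟨ht.1, le_min hspec ht.2⟩
  -- nonnegativity of each F n
  have hFnn : ∀ n, ∀ t ∈ Icc 0 (K n), 0 ≤ F n t := by
    intro n t₁ ht₁
    by_contra hneg
    push_neg at hneg
    have hGc := hFc n
    set A := {s ∈ Icc 0 t₁ | 0 ≤ F n s} with hA
    have h0A : (0:ℝ) ∈ A := ⟨⟨le_rfl, ht₁.1⟩, by rw [hF0 n]; exact hη⟩
    have hsubA : A ⊆ Icc 0 t₁ := fun x hx => hx.1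
    have hclA : IsClosed A := by
      have hAeq : A = Icc 0 t₁ ∩ F n ⁻¹' Ici 0 := by
        ext x
        simp only [hA, mem_sep_iff, mem_inter_iff, mem_preimage, mem_Ici]
      rw [hAeq]
      exact ContinuousOn.preimage_isClosed_of_isClosed
        (hGc.mono (Icc_subset_Icc le_rfl ht₁.2)) isClosed_Icc isClosed_Ici
    have hcompA : IsCompact A := isCompact_Icc.of_isClosed_subset hclA hsubA
    set s := sSup A with hs
    have hsA : s ∈ A := hcompA.sSup_mem ⟨0, h0A⟩
    have hst₁ : s < t₁ :=
      lt_of_le_of_ne hsA.1.2 (fun hcon => by rw [hcon] at hsA; linarith [hsA.2])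
    have hIoc : ∀ r ∈ Ioc s t₁, F n r < 0 := by
      intro r hr
      by_contra hge
      push_neg at hge
      have hrA : r ∈ A := ⟨⟨hsA.1.1.trans hr.1.le, hr.2⟩, hge⟩
      exact absurd (le_csSup hcompA.bddAbove hrA) (not_le.2 hr.1)
    have hconst : ∀ x ∈ Ioc s t₁, F n x = F n t₁ := by
      intro x hx
      have hx0 : 0 ≤ x := hsA.1.1.trans hx.1.le
      have key := norm_image_sub_le_of_norm_deriv_right_le_segment (f := F n)
        (f' := fun r => -(fODE θ a r (F n r))) (C := 0) (a := x) (b := t₁)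
        (hGc.mono (Icc_subset_Icc hx0 ht₁.2)) ?_ ?_ t₁ ⟨hx.2, le_rfl⟩
      · rw [zero_mul, Real.norm_eq_abs] at key
        have h5 : |F n t₁ - F n x| = 0 := le_antisymm key (abs_nonneg _)
        have h6 := abs_eq_zero.1 h5
        linarith
      · intro r hr
        exact hdw_Ici_of_Icc (hx0.trans hr.1) (lt_of_lt_of_le hr.2 ht₁.2)
          (hFd n r ⟨hx0.trans hr.1, hr.2.le.trans ht₁.2⟩)
      · intro r hr
        have hrI : r ∈ Ioc s t₁ := ⟨lt_of_lt_of_le hx.1 hr.1, hr.2.le⟩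
        have hFr : F n r < 0 := hIoc r hrI
        have har : 0 < a r := hapos r ⟨hx0.trans hr.1, (hr.2.trans_le ht₁.2).trans (hKn n).2⟩
        show ‖-(fODE θ a r (F n r))‖ ≤ 0
        rw [fODE_of_nonpos (not_lt.2 hFr.le) har]
        simp
    have hcw : ContinuousWithinAt (F n) (Icc s t₁) s :=
      (hGc.mono (Icc_subset_Icc hsA.1.1 ht₁.2)) s ⟨le_rfl, hst₁.le⟩
    have hseq : F n s = F n t₁ := by
      refine le_antisymm ?_ ?_
      · exact le_at_right_of hst₁ hcw (fun r hr => (hconst r hr).le)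
      · exact ge_at_right_of hst₁ hcw (fun r hr => (hconst r hr).ge)
    have h9 : 0 ≤ F n s := hsA.2
    rw [hseq] at h9
    linarith
  -- basic facts about Y₀
  have hY₀nn : ∀ t ∈ Ico 0 T, 0 ≤ Y₀ t := by
    intro t ht
    obtain ⟨n, hn⟩ := hidx t ht.2
    rw [hY₀F n t ⟨ht.1, hn⟩]
    exact hFnn n t ⟨ht.1, hn⟩
  have hY₀lip : ∀ s t : ℝ, 0 ≤ s → s ≤ t → t < T → |Y₀ t - Y₀ s| ≤ θ ^ 2 * (t - s) := by
    intro s t hs0 hst htT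
    obtain ⟨n, hn⟩ := hidx t htT
    have hsK : s ∈ Icc 0 (K n) := ⟨hs0, hst.trans hn⟩
    have htK : t ∈ Icc 0 (K n) := ⟨hs0.trans hst, hn⟩
    rw [hY₀F n t htK, hY₀F n s hsK]
    have key := norm_image_sub_le_of_norm_deriv_right_le_segment (f := F n)
      (f' := fun r => -(fODE θ a r (F n r))) (C := θ ^ 2) (a := s) (b := t)
      ((hFc n).mono (Icc_subset_Icc hs0 hn)) ?_ ?_ t ⟨hst, le_rfl⟩
    · simpa [Real.norm_eq_abs] using key
    · intro r hr
      exact hdw_Ici_of_Icc (hs0.trans hr.1) (lt_of_lt_of_le hr.2 hn)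
        (hFd n r ⟨hs0.trans hr.1, hr.2.le.trans hn⟩)
    · intro r hr
      have har : 0 < a r := hapos r ⟨hs0.trans hr.1, hr.2.trans htT⟩
      rw [Real.norm_eq_abs, abs_neg, abs_of_nonneg (fODE_nonneg har)]
      exact fODE_le_sq har
  have hY₀anti : ∀ s t : ℝ, 0 ≤ s → s ≤ t → t < T → Y₀ t ≤ Y₀ s := by
    intro s t hs0 hst htT
    obtain ⟨n, hn⟩ := hidx t htT
    have hsK : s ∈ Icc 0 (K n) := ⟨hs0, hst.trans hn⟩
    have htK : t ∈ Icc 0 (K n) := ⟨hs0.trans hst, hn⟩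
    rw [hY₀F n t htK, hY₀F n s hsK]
    have key := mono_of_rderiv_nonneg (W := fun x => -(F n x)) (u := 0) (v := K n)
      ((hFc n).neg) ?_ s hsK t htK hst
    · have key2 : -F n s ≤ -F n t := key
      linarith
    · intro x hx
      have har : 0 < a x := hapos x ⟨hx.1, hx.2.trans (hKn n).2⟩
      refine ⟨fODE θ a x (F n x), fODE_nonneg har, ?_⟩
      have := (hdw_Ici_of_Icc hx.1 hx.2 (hFd n x ⟨hx.1, hx.2.le⟩)).neg
      rwa [neg_neg] at this
  -- terminal value
  set l := sInf (Y₀ '' Ico 0 T) with hldef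
  have hbddB : BddBelow (Y₀ '' Ico 0 T) := by
    refine ⟨0, ?_⟩
    rintro yv ⟨t, ht, rfl⟩
    exact hY₀nn t ht
  have hneI : (Y₀ '' Ico 0 T).Nonempty := ⟨Y₀ 0, 0, ⟨le_rfl, hT⟩, rfl⟩
  have hlle : ∀ t ∈ Ico 0 T, l ≤ Y₀ t := fun t ht => csInf_le hbddB ⟨t, ht, rfl⟩
  have hl0 : 0 ≤ l := by
    refine le_csInf hneI ?_
    rintro yv ⟨t, ht, rfl⟩
    exact hY₀nn t ht
  have hlge : ∀ t ∈ Ico 0 T, Y₀ t - θ ^ 2 * (T - t) ≤ l := by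
    intro t ht
    refine le_csInf hneI ?_
    rintro yv ⟨s, hsI, rfl⟩
    rcases le_total t s with hts | hts
    · have := hY₀lip t s ht.1 hts hsI.2
      have h2 := (abs_le.1 this).1
      nlinarith [hsI.2]
    · have := hY₀anti s t hsI.1 hts ht.2
      nlinarith [sub_nonneg.2 ht.2.le]
  -- final function
  set Y : ℝ → ℝ := fun t => if t < T then Y₀ t else l with hYdef
  have hYIco : ∀ t, t < T → Y t = Y₀ t := fun t ht => by simp only [hYdef, if_pos ht]
  have hYT : Y T = l := by simp only [hYdef, if_neg (lt_irrefl T)]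
  have hYlip : ∀ s t : ℝ, s ∈ Icc 0 T → t ∈ Icc 0 T → s ≤ t → |Y t - Y s| ≤ θ ^ 2 * (t - s) := by
    intro s t hs ht hst
    rcases lt_or_eq_of_le ht.2 with htT | hteq
    · rw [hYIco t htT, hYIco s (lt_of_le_of_lt hst htT)]
      exact hY₀lip s t hs.1 hst htT
    · rcases lt_or_eq_of_le (hst.trans ht.2) with hsT | hseq
      · rw [hteq, hYT, hYIco s hsT]
        have h1 := hlle s ⟨hs.1, hsT⟩
        have h2 := hlge s ⟨hs.1, hsT⟩
        rw [abs_le]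
        constructor <;> [linarith; nlinarith [sub_nonneg.2 hsT.le, sq_nonneg θ]]
      · rw [hteq, hseq]
        simp
  have hYc : ContinuousOn Y (Icc 0 T) := by
    intro x hx
    rw [Metric.continuousWithinAt_iff]
    intro ε hε
    refine ⟨ε / (θ ^ 2 + 1), by positivity, fun {z} hz hdist => ?_⟩
    rw [Real.dist_eq] at hdist ⊢
    have hb : |Y z - Y x| ≤ θ ^ 2 * |z - x| := by
      rcases le_total z x with hzx | hzx
      · rw [abs_sub_comm, abs_of_nonpos (by linarith : z - x ≤ 0)]
        have := hYlip z x hz hx hzx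
        linarith [this]
      · rw [abs_of_nonneg (by linarith : 0 ≤ z - x)]
        exact hYlip x z hx hz hzx
    have h4 : θ ^ 2 * |z - x| ≤ θ ^ 2 * (ε / (θ ^ 2 + 1)) :=
      mul_le_mul_of_nonneg_left hdist.le (sq_nonneg θ)
    have h5 : θ ^ 2 * (ε / (θ ^ 2 + 1)) < ε := by
      have h6 : θ ^ 2 / (θ ^ 2 + 1) < 1 := by
        rw [div_lt_one (by positivity)]
        linarith
      calc θ ^ 2 * (ε / (θ ^ 2 + 1)) = θ ^ 2 / (θ ^ 2 + 1) * ε := by ring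
        _ < 1 * ε := mul_lt_mul_of_pos_right h6 hε
        _ = ε := one_mul ε
    calc |Y z - Y x| ≤ θ ^ 2 * |z - x| := hb
      _ < ε := by linarith
  -- remaining ForwardSol fields
  have hY0 : Y 0 = η := by
    rw [hYIco 0 hT, hY₀F 0 0 ⟨le_rfl, (hKn 0).1⟩, hF0 0]
  have hYnn : ∀ t ∈ Icc 0 T, 0 ≤ Y t := by
    intro t ht
    rcases lt_or_eq_of_le ht.2 with htT | hteq
    · rw [hYIco t htT]; exact hY₀nn t ⟨ht.1, htT⟩
    · rw [hteq, hYT]; exact hl0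
  have hYd : ∀ t ∈ Ico 0 T, HasDerivWithinAt Y (-(fODE θ a t (Y t))) (Ico 0 T) t := by
    intro t ht
    have hmid : (t + T) / 2 < T := by linarith [ht.2]
    obtain ⟨n, hn⟩ := hidx ((t + T) / 2) hmid
    have htK : t < K n := lt_of_lt_of_le (by linarith [ht.2]) hn
    have base := hFd n t ⟨ht.1, htK.le⟩
    have step1 : HasDerivWithinAt (F n) (-(fODE θ a t (F n t))) (Ico 0 T) t :=
      hdw_IcoT_of_Icc (hKn n).2 htK base
    have hmemev : Ico 0 T ∩ Iio (K n) ∈ 𝓝[Ico 0 T] t :=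
      inter_mem_nhdsWithin _ (Iio_mem_nhds htK)
    have hev : Y =ᶠ[𝓝[Ico 0 T] t] F n := by
      filter_upwards [hmemev] with x hx
      rw [hYIco x hx.1.2]
      exact hY₀F n x ⟨hx.1.1, hx.2.le⟩
    have heqt : Y t = F n t := by
      rw [hYIco t ht.2]
      exact hY₀F n t ⟨ht.1, htK.le⟩
    have step2 : HasDerivWithinAt Y (-(fODE θ a t (F n t))) (Ico 0 T) t :=
      step1.congr_of_eventuallyEq hev heqt
    rw [heqt]
    exact step2
  exact ⟨Y, hYc, hYnn, hY0, hYd⟩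
/-! ### The fence (subsolution) argument -/

lemma fence (hT : 0 < T) (hθ : 0 < θ) (hac : ContinuousOn a (Ico 0 T))
    (hapos : ∀ t ∈ Ico 0 T, 0 < a t) {c' t₀ : ℝ} (hc'0 : 0 < c') (hc'1 : c' < 1)
    (ht₀0 : 0 ≤ t₀) (ht₀T : t₀ < T)
    (hbound : ∀ s ∈ Ico t₀ T, a s ≤ c' * (θ * Real.sqrt (T - s)))
    {η : ℝ} {Y : ℝ → ℝ} (hfs : ForwardSol T θ a η Y)
    (hstart : Y t₀ ≤ ((1 - c') / 2) ^ 2 * θ ^ 2 * (T - t₀)) : Y T = 0 := by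
  set b := (1 - c') / 2 with hbdef
  have hb0 : 0 < b := by rw [hbdef]; linarith
  have hbc : b + c' < 1 := by rw [hbdef]; linarith
  have hbc0 : 0 < b + c' := by linarith
  set Z : ℝ → ℝ := fun s => b ^ 2 * θ ^ 2 * (T - s) with hZdef
  have hZd : ∀ x : ℝ, HasDerivAt Z (-(b ^ 2 * θ ^ 2)) x := by
    intro x
    have h1 : HasDerivAt (fun s : ℝ => T - s) (-1) x := by
      exact (hasDerivAt_id' x).const_sub T
    have h2 := h1.const_mul (b ^ 2 * θ ^ 2)
    simpa using h2
  have hZc : Continuous Z := by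
    rw [hZdef]
    exact continuous_const.mul (continuous_const.sub continuous_id)
  have hmain : ∀ t ∈ Ico t₀ T, Y t ≤ Z t := by
    intro t₁ ht₁
    by_contra hgt
    push_neg at hgt
    set A := {s ∈ Icc t₀ t₁ | Y s ≤ Z s} with hA
    have hsubIcc : Icc t₀ t₁ ⊆ Icc 0 T := Icc_subset_Icc ht₀0 ht₁.2.le
    have hA0 : t₀ ∈ A := ⟨⟨le_rfl, ht₁.1⟩, by
      have : Z t₀ = b ^ 2 * θ ^ 2 * (T - t₀) := rfl
      rw [this]
      calc Y t₀ ≤ ((1 - c') / 2) ^ 2 * θ ^ 2 * (T - t₀) := hstart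
        _ = b ^ 2 * θ ^ 2 * (T - t₀) := by rw [hbdef]⟩
    have hsubA : A ⊆ Icc t₀ t₁ := fun x hx => hx.1
    have hclA : IsClosed A := by
      have hAeq : A = Icc t₀ t₁ ∩ (fun s => Y s - Z s) ⁻¹' Iic 0 := by
        ext x
        simp only [hA, mem_sep_iff, mem_inter_iff, mem_preimage, mem_Iic, sub_nonpos]
      rw [hAeq]
      exact ContinuousOn.preimage_isClosed_of_isClosed
        ((hfs.1.mono hsubIcc).sub hZc.continuousOn) isClosed_Icc isClosed_Iic
    have hcompA : IsCompact A := isCompact_Icc.of_isClosed_subset hclA hsubA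
    set s := sSup A with hs
    have hsA : s ∈ A := hcompA.sSup_mem ⟨t₀, hA0⟩
    have hst₁ : s < t₁ :=
      lt_of_le_of_ne hsA.1.2 (fun hcon => by rw [hcon] at hsA; linarith [hsA.2])
    have hsT : s < T := hst₁.trans ht₁.2
    have hs0 : 0 ≤ s := ht₀0.trans hsA.1.1
    have hIoc : ∀ r ∈ Ioc s t₁, Z r < Y r := by
      intro r hr
      by_contra hge
      push_neg at hge
      have hrA : r ∈ A := ⟨⟨hsA.1.1.trans hr.1.le, hr.2⟩, hge⟩
      exact absurd (le_csSup hcompA.bddAbove hrA) (not_le.2 hr.1)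
    have heqs : Y s = Z s := by
      refine le_antisymm hsA.2 ?_
      have hcw : ContinuousWithinAt (fun r => Y r - Z r) (Icc s t₁) s :=
        ((hfs.1.mono (Icc_subset_Icc hs0 ht₁.2.le)).sub hZc.continuousOn) s ⟨le_rfl, hst₁.le⟩
      have hge := ge_at_right_of (g := fun r => Y r - Z r) (c := 0) hst₁ hcw
        (fun r hr => by show (0:ℝ) ≤ Y r - Z r; linarith [hIoc r hr])
      have hge2 : (0:ℝ) ≤ Y s - Z s := hge
      linarith
    -- derivative of the difference at s
    have hDd : HasDerivWithinAt (fun r => Y r - Z r)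
        (-(fODE θ a s (Y s)) - -(b ^ 2 * θ ^ 2)) (Ici s) s :=
      (fs_deriv_Ici hfs ⟨hs0, hsT⟩).sub (hZd s).hasDerivWithinAt
    have hDge := rderiv_nonneg hst₁ hDd
      (fun r hr => by
        show Y s - Z s ≤ Y r - Z r
        rw [heqs]
        have := hIoc r hr
        linarith)
    -- but the derivative is strictly negative
    have hTs : 0 < T - s := by linarith
    have hZs : 0 < Z s := by
      have : Z s = b ^ 2 * θ ^ 2 * (T - s) := rfl
      rw [this]; positivity
    have hsq : Real.sqrt (Z s) = b * θ * Real.sqrt (T - s) := by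
      have e1 : Z s = (b * θ) ^ 2 * (T - s) := by
        have : Z s = b ^ 2 * θ ^ 2 * (T - s) := rfl
        rw [this]; ring
      rw [e1, Real.sqrt_mul (sq_nonneg _), Real.sqrt_sq (by positivity : (0:ℝ) ≤ b * θ)]
    have hsqpos : 0 < Real.sqrt (T - s) := Real.sqrt_pos.2 hTs
    have hden : Real.sqrt (Z s) + a s ≤ (b + c') * (θ * Real.sqrt (T - s)) := by
      have hb1 := hbound s ⟨hsA.1.1, hsT⟩
      rw [hsq]
      nlinarith
    have hdenpos : 0 < Real.sqrt (Z s) + a s := by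
      have := hapos s ⟨hs0, hsT⟩
      have := Real.sqrt_nonneg (Z s)
      linarith
    have hfgt : b ^ 2 * θ ^ 2 < fODE θ a s (Y s) := by
      rw [heqs, fODE_of_pos hZs]
      have h1 : (Real.sqrt (Z s) + a s) ^ 2 ≤ ((b + c') * (θ * Real.sqrt (T - s))) ^ 2 :=
        pow_le_pow_left₀ hdenpos.le hden 2
      have h2 : θ ^ 2 * Z s / ((b + c') * (θ * Real.sqrt (T - s))) ^ 2
          ≤ θ ^ 2 * Z s / (Real.sqrt (Z s) + a s) ^ 2 := by
        apply div_le_div_of_nonneg_left (by positivity) (by positivity) h1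
      refine lt_of_lt_of_le ?_ h2
      have e2 : ((b + c') * (θ * Real.sqrt (T - s))) ^ 2 = (b + c') ^ 2 * (θ ^ 2 * (T - s)) := by
        rw [mul_pow, mul_pow, Real.sq_sqrt hTs.le]
      rw [e2, lt_div_iff₀ (by positivity)]
      have e3 : Z s = b ^ 2 * θ ^ 2 * (T - s) := rfl
      rw [e3]
      have hbc2 : (b + c') ^ 2 < 1 := by nlinarith
      have hX : 0 < b ^ 2 * θ ^ 2 * (θ ^ 2 * (T - s)) := by positivity
      calc b ^ 2 * θ ^ 2 * ((b + c') ^ 2 * (θ ^ 2 * (T - s)))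
          = (b + c') ^ 2 * (b ^ 2 * θ ^ 2 * (θ ^ 2 * (T - s))) := by ring
        _ < 1 * (b ^ 2 * θ ^ 2 * (θ ^ 2 * (T - s))) := mul_lt_mul_of_pos_right hbc2 hX
        _ = θ ^ 2 * (b ^ 2 * θ ^ 2 * (T - s)) := by ring
    linarith
  -- conclude at T
  have hle : Y T - Z T ≤ 0 :=
    le_at_T hT ht₀0 ht₀T ((hfs.1.sub hZc.continuousOn) T (right_mem_Icc.2 hT.le))
      (fun r hr => by show Y r - Z r ≤ 0; linarith [hmain r hr])
  have hZT : Z T = 0 := by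
    have : Z T = b ^ 2 * θ ^ 2 * (T - T) := rfl
    rw [this]; ring
  have hnn := hfs.2.1 T (right_mem_Icc.2 hT.le)
  linarith

/-! ### Conversions between the two notions of solution -/

lemma forward_to_diamond (hT : 0 < T) (hθ : 0 < θ) (hac : ContinuousOn a (Ico 0 T))
    (hapos : ∀ t ∈ Ico 0 T, 0 < a t) {η : ℝ} {Y : ℝ → ℝ}
    (hfs : ForwardSol T θ a η Y) (hη : 0 < η) (hYT : Y T = 0) :
    DiamondSol T θ a Y ∧ ∀ t ∈ Ico 0 T, 0 < Y t := by
  have hpos := forward_pos hT hac hapos hfs hη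
  refine ⟨⟨hfs.2.1, ?_, ?_, ?_, hYT⟩, hpos⟩
  · exact lip_absCont hθ (forward_lip hT hapos hfs)
  · intro t ht
    exact fs_deriv_Ici hfs ht
  · intro t ht
    have hcont : ContinuousOn (fun s => fODE θ a s (Y s)) (Ico 0 T) :=
      fODE_comp_contOn hac hapos subset_rfl (hfs.1.mono Ico_subset_Icc_self) hpos
    exact (hcont t ht).mono (fun x hx => ⟨ht.1.trans hx.1, hx.2⟩)

lemma diamond_to_forward (hT : 0 < T) (hθ : 0 < θ) (hac : ContinuousOn a (Ico 0 T))
    (hapos : ∀ t ∈ Ico 0 T, 0 < a t) {Y : ℝ → ℝ} (hd : DiamondSol T θ a Y) :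
    ForwardSol T θ a (Y 0) Y := by
  obtain ⟨hnn, hAC, hderiv, _hrc, hYT⟩ := hd
  have hYc : ContinuousOn Y (Icc 0 T) := absCont_contOn hAC
  have hη : 0 ≤ Y 0 := hnn 0 ⟨le_rfl, hT.le⟩
  obtain ⟨Z, hZ⟩ := exists_forward hT hθ hac hapos hη
  have heq0 : Y 0 = Z 0 := (hZ.2.2.1).symm
  have hIco : ∀ t ∈ Ico 0 T, Y t = Z t := by
    intro t ht
    rcases eq_or_lt_of_le ht.1 with h0 | h0
    · rw [← h0]; exact heq0
    refine gron_eq hT hac hapos le_rfl ht.2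
      (hYc.mono (Icc_subset_Icc le_rfl ht.2.le)) (hZ.1.mono (Icc_subset_Icc le_rfl ht.2.le))
      (fun x hx => hderiv x ⟨hx.1, hx.2.trans ht.2⟩)
      (fun x hx => fs_deriv_Ici hZ ⟨hx.1, hx.2.trans ht.2⟩) heq0 t ⟨ht.1, le_rfl⟩
  have hTeq : Y T = Z T := by
    have hle : Y T - Z T ≤ 0 :=
      le_at_T hT le_rfl hT ((hYc.sub hZ.1) T (right_mem_Icc.2 hT.le))
        (fun r hr => by show Y r - Z r ≤ 0; rw [hIco r hr]; simp)
    have hge : 0 ≤ Y T - Z T :=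
      ge_at_T hT le_rfl hT ((hYc.sub hZ.1) T (right_mem_Icc.2 hT.le))
        (fun r hr => by show 0 ≤ Y r - Z r; rw [hIco r hr]; simp)
    linarith
  have hEq : ∀ t ∈ Icc 0 T, Y t = Z t := by
    intro t ht
    rcases lt_or_eq_of_le ht.2 with htT | hteq
    · exact hIco t ⟨ht.1, htT⟩
    · rw [hteq]; exact hTeq
  refine ⟨hYc, hnn, rfl, ?_⟩
  intro t ht
  have hzd := hZ.2.2.2 t ht
  have hev : Y =ᶠ[𝓝[Ico 0 T] t] Z := by
    filter_upwards [self_mem_nhdsWithin] with x hx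
    exact hIco x hx
  have heqt : Y t = Z t := hIco t ht
  have step : HasDerivWithinAt Y (-(fODE θ a t (Z t))) (Ico 0 T) t :=
    hzd.congr_of_eventuallyEq hev heqt
  rw [heqt]
  exact step
end S11

/-- if `a > 0` is continuous on `[0,T)` and
`limsup_{t↑T} a(t)/(θ√(T−t)) < 1`, then (♦) has a maximal positive solution `Ȳ`;
moreover `Y` is a positive solution of (♦) iff it solves the forward problem with
initial value `η ∈ (0, Ȳ(0)]`, and for each such `η` the forward problem has a
unique solution. -/
theorem stmt11 (T θ : ℝ) (hT : 0 < T) (hθ : 0 < θ)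
    (a : ℝ → ℝ) (hac : ContinuousOn a (Set.Ico 0 T))
    (hapos : ∀ t ∈ Set.Ico 0 T, 0 < a t)
    (hlimsup : ∃ c < (1:ℝ), ∀ᶠ t in 𝓝[<] T, a t / (θ * Real.sqrt (T - t)) ≤ c) :
    ∃ Ybar : ℝ → ℝ,
      (DiamondSol T θ a Ybar ∧ ∀ t ∈ Set.Ico 0 T, 0 < Ybar t) ∧
      (∀ Y : ℝ → ℝ, DiamondSol T θ a Y → (∀ t ∈ Set.Ico 0 T, 0 < Y t) →
        ∀ t ∈ Set.Icc 0 T, Y t ≤ Ybar t) ∧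
      (∀ Y : ℝ → ℝ,
        (DiamondSol T θ a Y ∧ ∀ t ∈ Set.Ico 0 T, 0 < Y t) ↔
          ∃ η ∈ Set.Ioc 0 (Ybar 0), ForwardSol T θ a η Y) ∧
      ∀ η ∈ Set.Ioc 0 (Ybar 0),
        (∃ Y : ℝ → ℝ, ForwardSol T θ a η Y) ∧
        ∀ Y₁ Y₂ : ℝ → ℝ, ForwardSol T θ a η Y₁ → ForwardSol T θ a η Y₂ →
          Set.EqOn Y₁ Y₂ (Set.Icc 0 T) := by
  classical
  obtain ⟨c, hc1, hev⟩ := hlimsup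
  -- extract a uniform bound near T
  obtain ⟨u, huT, husub⟩ := mem_nhdsLT_iff_exists_Ioo_subset.1 (eventually_iff.1 hev)
  set c' : ℝ := max c (1/2) with hc'def
  have hc'0 : (0:ℝ) < c' := lt_of_lt_of_le (by norm_num) (le_max_right _ _)
  have hc'1 : c' < 1 := max_lt hc1 (by norm_num)
  set t₀ : ℝ := (max u 0 + T) / 2 with ht₀def
  have hmu : max u 0 < T := max_lt huT hT
  have ht₀0 : 0 ≤ t₀ := by
    have := le_max_right u 0
    rw [ht₀def]; linarith
  have ht₀T : t₀ < T := by rw [ht₀def]; linarith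
  have hut₀ : u < t₀ := by
    have := le_max_left u 0
    rw [ht₀def]; linarith
  have hbound : ∀ s ∈ Set.Ico t₀ T, a s ≤ c' * (θ * Real.sqrt (T - s)) := by
    intro s hs
    have hsIoo : s ∈ Ioo u T := ⟨lt_of_lt_of_le hut₀ hs.1, hs.2⟩
    have h1 : a s / (θ * Real.sqrt (T - s)) ≤ c := husub hsIoo
    have hTs : 0 < T - s := by linarith [hs.2]
    have hpos : 0 < θ * Real.sqrt (T - s) := mul_pos hθ (Real.sqrt_pos.2 hTs)
    have h2 : a s ≤ c * (θ * Real.sqrt (T - s)) := (div_le_iff₀ hpos).1 h1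
    have h3 : c * (θ * Real.sqrt (T - s)) ≤ c' * (θ * Real.sqrt (T - s)) :=
      mul_le_mul_of_nonneg_right (le_max_left _ _) hpos.le
    linarith
  -- the set of good initial conditions
  set S : Set ℝ := {e : ℝ | 0 < e ∧ ∀ Y : ℝ → ℝ, ForwardSol T θ a e Y → Y T = 0} with hSdef
  set z₀ : ℝ := ((1 - c') / 2) ^ 2 * θ ^ 2 * (T - t₀) with hz₀def
  have hz₀pos : 0 < z₀ := by
    rw [hz₀def]
    have h1 : 0 < (1 - c') / 2 := by linarith
    have h2 : 0 < T - t₀ := by linarith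
    positivity
  have hmemS : ∀ e : ℝ, 0 < e → e ≤ z₀ → e ∈ S := by
    intro e he0 hez
    refine ⟨he0, fun Y hY => ?_⟩
    refine S11.fence hT hθ hac hapos hc'0 hc'1 ht₀0 ht₀T hbound hY ?_
    have hanti := S11.forward_anti hT hapos hY 0 ⟨le_rfl, hT.le⟩ t₀ ⟨ht₀0, ht₀T.le⟩ ht₀0
    have hY0 : Y 0 = e := hY.2.2.1
    rw [← hz₀def]
    calc Y t₀ ≤ Y 0 := hanti
      _ = e := hY0
      _ ≤ z₀ := hez
  have hSne : S.Nonempty := ⟨z₀, hmemS z₀ hz₀pos le_rfl⟩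
  have hSbdd : BddAbove S := by
    refine ⟨θ ^ 2 * T, fun e he => ?_⟩
    obtain ⟨Y, hY⟩ := S11.exists_forward hT hθ hac hapos he.1.le
    have hYT : Y T = 0 := he.2 Y hY
    have hW := S11.forward_W_mono hT hapos hY 0 ⟨le_rfl, hT.le⟩ T (right_mem_Icc.2 hT.le) hT.le
    have hY0 : Y 0 = e := hY.2.2.1
    rw [hY0, hYT] at hW
    linarith [hW]
  set ηs : ℝ := sSup S with hηs
  have hηspos : 0 < ηs := lt_of_lt_of_le hz₀pos (le_csSup hSbdd (hmemS z₀ hz₀pos le_rfl))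
  obtain ⟨Ybar, hYb⟩ := S11.exists_forward hT hθ hac hapos hηspos.le
  have hYb0 : Ybar 0 = ηs := hYb.2.2.1
  -- ηs ∈ S
  have hstar : ∀ Y : ℝ → ℝ, ForwardSol T θ a ηs Y → Y T = 0 := by
    intro Y hY
    have h1 : ∀ t ∈ Set.Ico 0 T, Y t ≤ θ ^ 2 * (T - t) := by
      intro t ht
      refine le_of_forall_pos_le_add ?_
      intro ε hε
      obtain ⟨m, hm0, hm⟩ := S11.a_min hT hac hapos ht.1 ht.2
      set L : ℝ := θ ^ 2 / m ^ 2 with hL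
      have hexppos : 0 < Real.exp (L * (t - 0)) := Real.exp_pos _
      set δ : ℝ := ε / Real.exp (L * (t - 0)) with hδ
      have hδpos : 0 < δ := by rw [hδ]; positivity
      obtain ⟨e, heS, hegt⟩ := exists_lt_of_lt_csSup hSne (sub_lt_self ηs hδpos)
      have hele : e ≤ ηs := le_csSup hSbdd heS
      obtain ⟨Ye, hYe⟩ := S11.exists_forward hT hθ hac hapos heS.1.le
      have hkey := S11.gron hapos le_rfl ht.2
        (hY.1.mono (Icc_subset_Icc le_rfl ht.2.le)) (hYe.1.mono (Icc_subset_Icc le_rfl ht.2.le))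
        (fun x hx => S11.fs_deriv_Ici hY ⟨hx.1, hx.2.trans ht.2⟩)
        (fun x hx => S11.fs_deriv_Ici hYe ⟨hx.1, hx.2.trans ht.2⟩)
        (δ := δ) ?_ (L := L) ?_ t ⟨ht.1, le_rfl⟩
      · have hYeT : Ye T = 0 := heS.2 Ye hYe
        have hup : Ye t ≤ θ ^ 2 * (T - t) := by
          have hW := S11.forward_W_mono hT hapos hYe t ⟨ht.1, ht.2.le⟩ T
            (right_mem_Icc.2 hT.le) ht.2.le
          rw [hYeT] at hW
          linarith
        have habs := (abs_le.1 hkey).2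
        have hδe : δ * Real.exp (L * (t - 0)) = ε := by
          rw [hδ]
          field_simp
        rw [hδe] at habs
        linarith
      · have h2 : Y 0 - Ye 0 = ηs - e := by rw [hY.2.2.1, hYe.2.2.1]
        rw [h2, abs_of_nonneg (by linarith)]
        linarith
      · intro x hx
        have hmx := hm x ⟨hx.1, hx.2.le⟩
        rw [hL]
        exact div_le_div_of_nonneg_left (sq_nonneg θ) (by positivity) (by nlinarith)
    have hle : Y T ≤ 0 := by
      have := S11.le_at_T (g := fun r => Y r - θ ^ 2 * (T - r)) (c := 0) hT le_rfl hT
        ((hY.1.sub (continuous_const.mul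
          (continuous_const.sub continuous_id)).continuousOn) T (right_mem_Icc.2 hT.le))
        (fun r hr => by show Y r - θ ^ 2 * (T - r) ≤ 0; linarith [h1 r hr])
      have h3 : Y T - θ ^ 2 * (T - T) ≤ 0 := this
      have h4 : θ ^ 2 * (T - T) = 0 := by ring
      linarith
    exact le_antisymm hle (hY.2.1 T (right_mem_Icc.2 hT.le))
  have hηsS : ηs ∈ S := ⟨hηspos, hstar⟩
  have hYbT : Ybar T = 0 := hstar Ybar hYb
  -- everything below ηs is in S
  have hdown : ∀ e : ℝ, 0 < e → e ≤ ηs → ∀ Y : ℝ → ℝ, ForwardSol T θ a e Y → Y T = 0 := by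
    intro e he0 hele Y hY
    have hcomp := S11.forward_comp hT hac hapos hY hYb hele T (right_mem_Icc.2 hT.le)
    rw [hYbT] at hcomp
    exact le_antisymm hcomp (hY.2.1 T (right_mem_Icc.2 hT.le))
  -- S-membership of initial values of positive diamond solutions
  have hdiamS : ∀ Y : ℝ → ℝ, DiamondSol T θ a Y → (∀ t ∈ Set.Ico 0 T, 0 < Y t) → Y 0 ∈ S := by
    intro Y hYd hYpos
    have hfs := S11.diamond_to_forward hT hθ hac hapos hYd
    refine ⟨hYpos 0 ⟨le_rfl, hT⟩, fun Y' hY' => ?_⟩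
    have heq := S11.forward_eq_from hT hac hapos hY' hfs ⟨le_rfl, hT⟩
      (by rw [hY'.2.2.1, hfs.2.2.1]) T (right_mem_Icc.2 hT.le)
    rw [heq]
    exact hYd.2.2.2.2
  refine ⟨Ybar, ⟨?_, ?_⟩, ?_, ?_, ?_⟩
  · exact (S11.forward_to_diamond hT hθ hac hapos hYb hηspos hYbT).1
  · exact (S11.forward_to_diamond hT hθ hac hapos hYb hηspos hYbT).2
  · intro Y hYd hYpos t ht
    have hfs := S11.diamond_to_forward hT hθ hac hapos hYd
    have hle : Y 0 ≤ ηs := le_csSup hSbdd (hdiamS Y hYd hYpos)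
    exact S11.forward_comp hT hac hapos hfs hYb hle t ht
  · intro Y
    constructor
    · rintro ⟨hYd, hYpos⟩
      have hfs := S11.diamond_to_forward hT hθ hac hapos hYd
      refine ⟨Y 0, ⟨hYpos 0 ⟨le_rfl, hT⟩, ?_⟩, hfs⟩
      rw [hYb0]
      exact le_csSup hSbdd (hdiamS Y hYd hYpos)
    · rintro ⟨e, ⟨he0, hele⟩, hfs⟩
      rw [hYb0] at hele
      have hYT : Y T = 0 := hdown e he0 hele Y hfs
      have := S11.forward_to_diamond hT hθ hac hapos hfs he0 hYT
      exact ⟨this.1, this.2⟩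
  · rintro e ⟨he0, hele⟩
    constructor
    · exact S11.exists_forward hT hθ hac hapos he0.le
    · intro Y₁ Y₂ h1 h2 t ht
      exact S11.forward_eq_from hT hac hapos h1 h2 ⟨le_rfl, hT⟩
        (by rw [h1.2.2.1, h2.2.2.1]) t ht
end

section
/- Let T > 0, θ > 0, and let a:[0,T)→ℝ be continuous with a(t) ≥ 0 for all t∈[0,T), and suppose there exists δ∈(0,T) such that a(t) = 0 for all t∈[T−δ,T). Then the backward ODE (♦) admits exactly one solution, and this solution is positive (strictly positive on [0,T)). -/
open MeasureTheory Set Filter Topology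

lemma rightDeriv_nonpos_le {f f' : ℝ → ℝ} {p q : ℝ}
    (hf : ContinuousOn f (Icc p q))
    (hf' : ∀ x ∈ Ico p q, HasDerivWithinAt f (f' x) (Ici x) x)
    (h0 : ∀ x ∈ Ico p q, f' x ≤ 0) :
    ∀ x ∈ Icc p q, f x ≤ f p := fun x hx =>
  image_le_of_deriv_right_le_deriv_boundary (B := fun _ => f p) (B' := fun _ => 0)
    hf hf' le_rfl continuousOn_const
    (fun y _ => hasDerivWithinAt_const y _ (f p)) h0 hx

lemma coreDeriv' (θ α : ℝ) {s : ℝ} (hs : 0 < s) (hα : 0 ≤ α) :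
    HasDerivAt (fun z => θ^2 * z / (Real.sqrt z + α)^2)
      (θ^2 * α / (s + α)^3) (s^2) := by
  have hsa : 0 < s + α := by linarith
  have hnum : HasDerivAt (fun z : ℝ => θ^2 * z) (θ^2) (s^2) := by
    simpa using (hasDerivAt_id (s^2)).const_mul (θ^2)
  have hsq : HasDerivAt Real.sqrt (1 / (2 * s)) (s^2) := by
    simpa [Real.sqrt_sq hs.le] using Real.hasDerivAt_sqrt (by positivity : (s:ℝ)^2 ≠ 0)
  have hden : HasDerivAt (fun z => (Real.sqrt z + α)^2)
      (2 * (s + α) * (1 / (2 * s))) (s^2) := by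
    simpa [Real.sqrt_sq hs.le] using ((hsq.add_const α).fun_pow 2)
  have := hnum.div hden (by positivity)
  refine this.congr_deriv ?_
  rw [Real.sqrt_sq hs.le]
  field_simp
  ring

lemma coreDeriv (θ α : ℝ) {y : ℝ} (hy : 0 < y) (hα : 0 ≤ α) :
    HasDerivAt (fun z => θ^2 * z / (Real.sqrt z + α)^2)
      (θ^2 * α / (Real.sqrt y + α)^3) y := by
  have h2 : Real.sqrt y ^ 2 = y := Real.sq_sqrt hy.le
  have := coreDeriv' θ α (Real.sqrt_pos.2 hy) hα
  rwa [h2] at this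

/-- Lipschitz-type estimate for the core function on `Ici c`. -/
lemma coreLip {θ c A α : ℝ} (hc : 0 < c) (hα : 0 ≤ α) (hαA : α ≤ A)
    {y z : ℝ} (hy : y ∈ Ici c) (hz : z ∈ Ici c) :
    |θ^2*y/(Real.sqrt y + α)^2 - θ^2*z/(Real.sqrt z + α)^2|
      ≤ (θ^2 * A / (Real.sqrt c)^3) * |y - z| := by
  have hsc : 0 < Real.sqrt c := Real.sqrt_pos.2 hc
  have := Convex.norm_image_sub_le_of_norm_hasDerivWithin_le
    (f := fun z => θ^2 * z / (Real.sqrt z + α)^2)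
    (f' := fun x => θ^2 * α / (Real.sqrt x + α)^3)
    (s := Ici c) (C := θ^2 * A / (Real.sqrt c)^3)
    (fun x hx => (coreDeriv θ α (lt_of_lt_of_le hc hx) hα).hasDerivWithinAt)
    (fun x hx => ?_) (convex_Ici c) hz hy
  · simpa [Real.norm_eq_abs] using this
  · have hsx : Real.sqrt c ≤ Real.sqrt x := Real.sqrt_le_sqrt hx
    have h1 : 0 < Real.sqrt x + α := by linarith
    rw [Real.norm_eq_abs, abs_of_nonneg (by positivity)]
    exact div_le_div₀ (mul_nonneg (sq_nonneg θ) (hα.trans hαA)) (by nlinarith) (by positivity)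
      (pow_le_pow_left₀ hsc.le (by linarith) 3)

set_option maxHeartbeats 1000000 in
/-- if `a ≥ 0` is continuous on `[0,T)` and vanishes on `[T−δ,T)` for some
`δ ∈ (0,T)`, then the backward ODE (♦) admits exactly one solution, and it is positive
on `[0,T)`. -/
theorem stmt12 (T θ : ℝ) (hT : 0 < T) (hθ : 0 < θ)
    (a : ℝ → ℝ) (hac : ContinuousOn a (Set.Ico 0 T))
    (ha0 : ∀ t ∈ Set.Ico 0 T, 0 ≤ a t)
    (hδ : ∃ δ ∈ Set.Ioo 0 T, ∀ t ∈ Set.Ico (T - δ) T, a t = 0) :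
    ∃ Y : ℝ → ℝ, DiamondSol T θ a Y ∧ (∀ t ∈ Set.Ico 0 T, 0 < Y t) ∧
      ∀ Y' : ℝ → ℝ, DiamondSol T θ a Y' → Set.EqOn Y' Y (Set.Icc 0 T) := by
  obtain ⟨δ, ⟨hδ0, hδT⟩, haz⟩ := hδ
  set b := T - δ with hbdef
  have hb0 : 0 < b := sub_pos.2 hδT
  have hbT : b < T := by simp only [hbdef]; linarith
  set c : ℝ := θ^2*δ/2 with hcdef
  have hc : 0 < c := by positivity
  have hsub : Icc (0:ℝ) b ⊆ Ico 0 T := fun x hx => ⟨hx.1, lt_of_le_of_lt hx.2 hbT⟩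
  obtain ⟨A, hA⟩ := (isCompact_Icc : IsCompact (Icc (0:ℝ) b)).exists_bound_of_continuousOn
    (hac.mono hsub)
  have hA0 : 0 ≤ A := le_trans (norm_nonneg _) (hA 0 ⟨le_rfl, hb0.le⟩)
  have haA : ∀ t ∈ Icc (0:ℝ) b, a t ≤ A := fun t ht =>
    (le_abs_self _).trans (by simpa [Real.norm_eq_abs] using hA t ht)
  have hann : ∀ t ∈ Icc (0:ℝ) b, 0 ≤ a t := fun t ht => ha0 t (hsub ht)
  set v : ℝ → ℝ → ℝ :=
    fun t y => -(θ^2 * max y c / (Real.sqrt (max y c) + a t)^2) with hvdef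
  set L : ℝ := θ^2 * A / (Real.sqrt c)^3 with hLdef
  have hL0 : 0 ≤ L := by positivity
  have hvnonpos : ∀ t ∈ Icc (0:ℝ) b, ∀ y, v t y ≤ 0 := by
    intro t ht y
    have h1 : (0:ℝ) < max y c := lt_max_of_lt_right hc
    have := hann t ht
    simp only [hvdef, neg_nonpos]
    positivity
  have hvbdd : ∀ t ∈ Icc (0:ℝ) b, ∀ y, ‖v t y‖ ≤ θ^2 := by
    intro t ht y
    have h1 : (0:ℝ) < max y c := lt_max_of_lt_right hc
    have h2 : 0 ≤ a t := hann t ht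
    have h3 : 0 < Real.sqrt (max y c) := Real.sqrt_pos.2 h1
    have h4 : Real.sqrt (max y c) ^ 2 = max y c := Real.sq_sqrt h1.le
    rw [hvdef]
    simp only [Real.norm_eq_abs, abs_neg]
    rw [abs_of_nonneg (by positivity)]
    rw [div_le_iff₀ (by positivity)]
    nlinarith [mul_nonneg (mul_nonneg (sq_nonneg θ) h3.le) h2,
      mul_nonneg (sq_nonneg θ) (sq_nonneg (a t)), h4]
  have hpl : IsPicardLindelof v (tmin := 0) (tmax := b) ⟨b, ⟨hb0.le, le_rfl⟩⟩ (θ^2*δ)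
      (Real.toNNReal (θ^2*T)) 0 (Real.toNNReal (θ^2)) (Real.toNNReal L) := by
    constructor
    · intro t ht
      apply LipschitzOnWith.of_dist_le_mul
      intro x _ y _
      rw [Real.dist_eq, Real.dist_eq, hvdef]
      have h1 : max x c ∈ Ici c := mem_Ici.2 (le_max_right _ _)
      have h2 : max y c ∈ Ici c := mem_Ici.2 (le_max_right _ _)
      have key := coreLip (θ := θ) hc (hann t ht) (haA t ht) h1 h2
      have hmax : |max x c - max y c| ≤ |x - y| := abs_max_sub_max_le_abs x y c
      calc |-(θ ^ 2 * max x c / (Real.sqrt (max x c) + a t) ^ 2) -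
              -(θ ^ 2 * max y c / (Real.sqrt (max y c) + a t) ^ 2)|
          = |θ ^ 2 * max x c / (Real.sqrt (max x c) + a t) ^ 2 -
              θ ^ 2 * max y c / (Real.sqrt (max y c) + a t) ^ 2| := by
            rw [← abs_neg]; ring_nf
        _ ≤ (θ^2 * A / (Real.sqrt c)^3) * |max x c - max y c| := key
        _ ≤ (θ^2 * A / (Real.sqrt c)^3) * |x - y| := by
            apply mul_le_mul_of_nonneg_left hmax hL0
        _ = (Real.toNNReal L : ℝ) * |x - y| := by
            rw [Real.coe_toNNReal _ hL0]
    · intro x _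
      have h1 : (0:ℝ) < max x c := lt_max_of_lt_right hc
      have h3 : 0 < Real.sqrt (max x c) := Real.sqrt_pos.2 h1
      apply ContinuousOn.neg
      apply ContinuousOn.div continuousOn_const
      · exact ((continuousOn_const.add (hac.mono hsub)).pow 2)
      · intro t ht
        have := hann t ht
        positivity
    · intro t ht x _
      rw [Real.coe_toNNReal _ (sq_nonneg θ)]
      exact hvbdd t ht x
    · have : max (b - b) (b - 0) = b := by simp [hb0.le]
      show _ * max (b - b) (b - 0) ≤ _
      rw [this]
      simp only [tsub_zero, NNReal.coe_zero, sub_zero, Real.coe_toNNReal _ (sq_nonneg θ),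
        Real.coe_toNNReal _ (by positivity : (0:ℝ) ≤ θ^2*T)]
      nlinarith [sq_nonneg θ]
  obtain ⟨α, hαb, hαd⟩ := hpl.exists_eq_forall_mem_Icc_hasDerivWithinAt₀
  replace hαb : α b = θ^2*δ := hαb
  have hαcont : ContinuousOn α (Icc 0 b) := fun t ht => (hαd t ht).continuousWithinAt
  have hαr : ∀ t ∈ Ico (0:ℝ) b, HasDerivWithinAt α (v t (α t)) (Ici t) t := fun t ht =>
    (hαd t (Ico_subset_Icc_self ht)).mono_of_mem_nhdsWithin (Icc_mem_nhdsGE_of_mem ht)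
  have hαlb : ∀ t ∈ Icc (0:ℝ) b, θ^2*δ ≤ α t := by
    intro t ht
    have key := rightDeriv_nonpos_le (f := α) (f' := fun x => v x (α x)) (p := t) (q := b)
      (hαcont.mono (Icc_subset_Icc ht.1 le_rfl))
      (fun x hx => hαr x ⟨le_trans ht.1 hx.1, hx.2⟩)
      (fun x hx => hvnonpos x ⟨le_trans ht.1 hx.1, hx.2.le⟩ (α x))
    have := key b ⟨ht.2, le_rfl⟩
    rw [hαb] at this
    linarith [this]
  have hcαlb : ∀ t ∈ Icc (0:ℝ) b, c ≤ α t := by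
    intro t ht
    have := hαlb t ht
    rw [hcdef]
    nlinarith [sq_nonneg θ]
  -- value of v at α equals the unclipped field
  have hvα : ∀ t ∈ Icc (0:ℝ) b, v t (α t) = -(θ^2 * α t / (Real.sqrt (α t) + a t)^2) := by
    intro t ht
    rw [hvdef]
    simp only [max_eq_left (hcαlb t ht)]
  -- the glued function
  set Y : ℝ → ℝ := fun t => if t ≤ b then α t else θ^2*(T - t) with hYdef
  have hYle : ∀ t, t ≤ b → Y t = α t := fun t ht => if_pos ht
  have hYgt : ∀ t, b < t → Y t = θ^2*(T - t) := fun t ht => if_neg (not_le.2 ht)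
  have hY2 : ∀ t ∈ Icc b T, Y t = θ^2*(T - t) := by
    intro t ht
    rcases eq_or_lt_of_le ht.1 with h|h
    · rw [← h, hYle b le_rfl, hαb, hbdef]; ring
    · exact hYgt t h
  have hYpos : ∀ t ∈ Ico (0:ℝ) T, 0 < Y t := by
    intro t ht
    by_cases h : t ≤ b
    · rw [hYle t h]
      have := hαlb t ⟨ht.1, h⟩
      nlinarith
    · rw [hYgt t (not_le.1 h)]
      have : 0 < T - t := by linarith [ht.2]
      positivity
  have hYT : Y T = 0 := by rw [hYgt T hbT]; ring
  have hYnn : ∀ t ∈ Icc (0:ℝ) T, 0 ≤ Y t := by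
    intro t ht
    rcases eq_or_lt_of_le ht.2 with h|h
    · rw [h, hYT]
    · exact (hYpos t ⟨ht.1, h⟩).le
  -- fODE values
  have hfY : ∀ t ∈ Ico (0:ℝ) T,
      fODE θ a t (Y t) = θ^2 * Y t / (Real.sqrt (Y t) + a t)^2 := by
    intro t ht
    rw [fODE, if_pos (hYpos t ht)]
  have hfconst : ∀ y : ℝ, 0 < y → θ^2 * y / (Real.sqrt y + 0)^2 = θ^2 := by
    intro y hy
    rw [add_zero, Real.sq_sqrt hy.le, mul_div_assoc, div_self hy.ne', mul_one]
  -- derivative condition for Y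
  have hYd : ∀ t ∈ Ico (0:ℝ) T, HasDerivWithinAt Y (-(fODE θ a t (Y t))) (Ici t) t := by
    intro t ht
    by_cases htb : t < b
    · have h1 : HasDerivWithinAt α (v t (α t)) (Ici t) t := hαr t ⟨ht.1, htb⟩
      have hmem : Iio b ∈ 𝓝[Ici t] t :=
        mem_nhdsWithin_of_mem_nhds (Iio_mem_nhds htb)
      have hev : Y =ᶠ[𝓝[Ici t] t] α := by
        filter_upwards [hmem] with s hs
        exact hYle s hs.le
      have h2 := h1.congr_of_eventuallyEq hev (hYle t htb.le)
      refine h2.congr_deriv ?_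
      rw [hfY t ht, hYle t htb.le, hvα t ⟨ht.1, htb.le⟩]
    · have ht2 : b ≤ t := not_lt.1 htb
      have heqlin : ∀ s ∈ Ici t, Y s = θ^2*(T - s) := by
        intro s hs
        by_cases h : s ≤ b
        · have hsb : s = b := le_antisymm h (ht2.trans hs)
          rw [hYle s h, hsb, hαb, hbdef]; ring
        · exact hYgt s (not_le.1 h)
      have hlin : HasDerivAt (fun s => θ^2*(T - s)) (-θ^2) t := by
        have := ((hasDerivAt_id t).const_sub T).const_mul (θ^2)
        simpa using this
      have h2 := (hlin.hasDerivWithinAt (s := Ici t)).congr heqlin (heqlin t self_mem_Ici)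
      refine h2.congr_deriv ?_
      have haz' : a t = 0 := haz t ⟨ht2, ht.2⟩
      rw [hfY t ht, haz', hfconst _ (hYpos t ht)]
  -- Lipschitz estimate
  have hlipL : ∀ x y : ℝ, 0 ≤ x → x ≤ y → y ≤ b → |Y y - Y x| ≤ θ^2 * (y - x) := by
    intro x y hx0 hxy hyb
    have key := norm_image_sub_le_of_norm_deriv_right_le_segment (a := x) (b := y)
      (f := α) (f' := fun s => v s (α s)) (C := θ^2)
      (hαcont.mono (Icc_subset_Icc hx0 hyb))
      (fun s hs => hαr s ⟨hx0.trans hs.1, lt_of_lt_of_le hs.2 hyb⟩)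
      (fun s hs => hvbdd s ⟨hx0.trans hs.1, hs.2.le.trans hyb⟩ (α s))
    have := key y ⟨hxy, le_rfl⟩
    rw [hYle y hyb, hYle x (hxy.trans hyb)]
    simpa [Real.norm_eq_abs] using this
  have hlipR : ∀ x y : ℝ, b ≤ x → x ≤ y → y ≤ T → |Y y - Y x| ≤ θ^2 * (y - x) := by
    intro x y hbx hxy hyT
    rw [hY2 y ⟨hbx.trans hxy, hyT⟩, hY2 x ⟨hbx, hxy.trans hyT⟩]
    have h1 : θ^2*(T - y) - θ^2*(T - x) = -(θ^2*(y - x)) := by ring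
    rw [h1, abs_neg, abs_of_nonneg (by nlinarith [sq_nonneg θ])]
  have hlip : ∀ x ∈ Icc (0:ℝ) T, ∀ y ∈ Icc (0:ℝ) T, x ≤ y → |Y y - Y x| ≤ θ^2 * (y - x) := by
    intro x hx y hy hxy
    by_cases h1 : y ≤ b
    · exact hlipL x y hx.1 hxy h1
    by_cases h2 : b ≤ x
    · exact hlipR x y h2 hxy hy.2
    have h1' : b ≤ y := (not_le.1 h1).le
    have h2' : x ≤ b := (not_le.1 h2).le
    have e1 := hlipL x b hx.1 h2' le_rfl
    have e2 := hlipR b y le_rfl h1' hy.2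
    have := abs_sub_le (Y y) (Y b) (Y x)
    calc |Y y - Y x| ≤ |Y y - Y b| + |Y b - Y x| := abs_sub_le _ _ _
      _ ≤ θ^2*(y - b) + θ^2*(b - x) := add_le_add e2 e1
      _ = θ^2 * (y - x) := by ring
  have hYcont : ContinuousOn Y (Icc 0 T) := by
    apply LipschitzOnWith.continuousOn (K := (θ^2 : ℝ).toNNReal)
    apply LipschitzOnWith.of_dist_le_mul
    intro x hx y hy
    rw [Real.dist_eq, Real.dist_eq, Real.coe_toNNReal _ (sq_nonneg θ)]
    rcases le_total x y with h|h
    · rw [abs_sub_comm (Y x) (Y y), abs_sub_comm x y, abs_of_nonneg (sub_nonneg.2 h)]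
      exact hlip x hx y hy h
    · rw [abs_of_nonneg (sub_nonneg.2 h)]
      exact hlip y hy x hx h
  have hYac : AbsContOn Y 0 T := by
    intro ε hε
    refine ⟨ε/(θ^2+1), by positivity, ?_⟩
    intro n I hI hdisj hsum
    have key : ∀ i : Fin n, |Y (I i).2 - Y (I i).1| ≤ θ^2 * ((I i).2 - (I i).1) := by
      intro i
      obtain ⟨h1, h2, h3⟩ := hI i
      exact hlip (I i).1 ⟨h1, h2.trans h3⟩ (I i).2 ⟨h1.trans h2, h3⟩ h2
    calc (∑ i, |Y (I i).2 - Y (I i).1|) ≤ ∑ i, θ^2 * ((I i).2 - (I i).1) :=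
          Finset.sum_le_sum (fun i _ => key i)
      _ = θ^2 * ∑ i, ((I i).2 - (I i).1) := by rw [Finset.mul_sum]
      _ < θ^2 * (ε/(θ^2+1)) := mul_lt_mul_of_pos_left hsum (by positivity)
      _ < ε := by
          rw [mul_div_assoc', div_lt_iff₀ (by positivity)]
          nlinarith [sq_nonneg θ]
  have hYG : ∀ t ∈ Ico (0:ℝ) T,
      ContinuousWithinAt (fun s => fODE θ a s (Y s)) (Ico t T) t := by
    have hGc : ContinuousOn (fun s => θ^2 * Y s / (Real.sqrt (Y s) + a s)^2) (Ico 0 T) := by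
      apply ContinuousOn.div
      · exact continuousOn_const.mul (hYcont.mono Ico_subset_Icc_self)
      · exact ((Real.continuous_sqrt.comp_continuousOn
          (hYcont.mono Ico_subset_Icc_self)).add hac).pow 2
      · intro s hs
        have h1 : 0 < Real.sqrt (Y s) := Real.sqrt_pos.2 (hYpos s hs)
        have h2 := ha0 s hs
        positivity
    intro t ht
    have hss : Ico t T ⊆ Ico 0 T := fun s hs => ⟨le_trans ht.1 hs.1, hs.2⟩
    have h2 := (hGc t ht).mono hss
    exact h2.congr (fun s hs => hfY s (hss hs)) (hfY t ht)
  refine ⟨Y, ⟨hYnn, hYac, hYd, hYG, hYT⟩, hYpos, ?_⟩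
  intro Z hZ
  obtain ⟨hZnn, hZac, hZd, -, hZT⟩ := hZ
  have hZcont : ContinuousOn Z (Icc 0 T) := by
    intro t ht
    rw [Metric.continuousWithinAt_iff]
    intro ε hε
    obtain ⟨δ₀, hδ₀, H⟩ := hZac ε hε
    refine ⟨δ₀, hδ₀, ?_⟩
    intro s hs hdist
    have key := H 1 (fun _ => (min s t, max s t)) ?_ ?_ ?_
    · rw [Fin.sum_univ_one] at key
      rcases le_total s t with h|h
      · simpa [Real.dist_eq, min_eq_left h, max_eq_right h, abs_sub_comm] using key
      · simpa [Real.dist_eq, min_eq_right h, max_eq_left h] using key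
    · intro i
      exact ⟨le_min hs.1 ht.1, min_le_max, max_le hs.2 ht.2⟩
    · intro i j hij; exact absurd (Subsingleton.elim i j) hij
    · rw [Fin.sum_univ_one, max_sub_min_eq_abs]
      rwa [Real.dist_eq, abs_sub_comm] at hdist
  have hfZθ : ∀ t ∈ Ico b T, fODE θ a t (Z t) = θ^2 := by
    intro t ht
    have haz' : a t = 0 := haz t ht
    rw [fODE]
    by_cases h : 0 < Z t
    · rw [if_pos h, haz', hfconst _ h]
    · rw [if_neg h, if_pos haz']
  have hZlin : ∀ t ∈ Icc b T, Z t = θ^2*(T - t) := by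
    set h : ℝ → ℝ := fun t => Z t + θ^2*t with hhdef
    have hhc : ContinuousOn h (Icc b T) :=
      (hZcont.mono (Icc_subset_Icc hb0.le le_rfl)).add
        (continuousOn_const.mul continuousOn_id)
    have hhd : ∀ x ∈ Ico b T, HasDerivWithinAt h 0 (Ici x) x := by
      intro x hx
      have h1 := hZd x ⟨hb0.le.trans hx.1, hx.2⟩
      rw [hfZθ x hx] at h1
      have h2 : HasDerivWithinAt (fun t => θ^2*t) (θ^2) (Ici x) x :=
        (((hasDerivAt_id x).const_mul (θ^2)).hasDerivWithinAt).congr_deriv (by ring)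
      exact (h1.add h2).congr_deriv (by ring)
    have hconst := norm_image_sub_le_of_norm_deriv_right_le_segment
      (f := h) (f' := fun _ => (0:ℝ)) (C := 0) hhc hhd (fun x _ => by simp)
    have hhb : ∀ x ∈ Icc b T, h x = h b := by
      intro x hx
      have := hconst x hx
      rw [zero_mul, Real.norm_eq_abs] at this
      have := abs_nonpos_iff.1 this
      linarith [sub_eq_zero.1 this]
    intro t ht
    have e1 : h t = h b := hhb t ht
    have e2 : h T = h b := hhb T ⟨hbT.le, le_rfl⟩
    have hTv : h T = θ^2*T := by rw [hhdef]; simp [hZT]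
    have : Z t + θ^2*t = θ^2*T := by
      have : h t = θ^2*T := by rw [e1, ← e2, hTv]
      simpa [hhdef] using this
    linear_combination this
  have hZb : Z b = θ^2*δ := by rw [hZlin b ⟨le_rfl, hbT.le⟩, hbdef]; ring
  have hfnn : ∀ t y, 0 ≤ fODE θ a t y := by
    intro t y
    rw [fODE]
    split_ifs with h1 h2
    · exact div_nonneg (by nlinarith [sq_nonneg θ]) (sq_nonneg _)
    · positivity
    · exact le_rfl
  have hZlb : ∀ s ∈ Icc (0:ℝ) b, θ^2*δ ≤ Z s := by
    intro s hs
    have key := rightDeriv_nonpos_le (f := Z) (f' := fun x => -(fODE θ a x (Z x)))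
      (p := s) (q := b)
      (hZcont.mono (Icc_subset_Icc hs.1 hbT.le))
      (fun x hx => hZd x ⟨hs.1.trans hx.1, hx.2.trans hbT⟩)
      (fun x _ => neg_nonpos.2 (hfnn x (Z x)))
    have := key b ⟨hs.2, le_rfl⟩
    rw [hZb] at this
    linarith
  set F : ℝ → ℝ → ℝ := fun t y => θ^2 * y / (Real.sqrt y + a t)^2 with hFdef
  have hZda : ∀ x ∈ Ico (0:ℝ) b, HasDerivWithinAt Z (-(F x (Z x))) (Ici x) x := by
    intro x hx
    have h1 := hZd x ⟨hx.1, hx.2.trans hbT⟩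
    rwa [fODE, if_pos (lt_of_lt_of_le (show (0:ℝ) < θ^2*δ by positivity)
      (hZlb x (Ico_subset_Icc_self hx)))] at h1
  have hαda : ∀ x ∈ Ico (0:ℝ) b, HasDerivWithinAt α (-(F x (α x))) (Ici x) x := by
    intro x hx
    have h1 := hαr x hx
    rwa [hvα x (Ico_subset_Icc_self hx)] at h1
  set K : ℝ := θ^2 * A / (Real.sqrt (θ^2*δ))^3 with hKdef
  have hK0 : 0 ≤ K := by positivity
  set u : ℝ → ℝ := fun x => Z x - α x with hudef
  set E : ℝ → ℝ := fun x => Real.exp (2*K*x) with hEdef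
  set ψ : ℝ → ℝ := fun x => u x^2 * E x with hψdef
  set D : ℝ → ℝ := fun x =>
    (2*u x*((-(F x (Z x))) - (-(F x (α x)))))*E x + u x^2*(E x*(2*K)) with hDdef
  have hψd : ∀ x ∈ Ico (0:ℝ) b, HasDerivWithinAt ψ (D x) (Ici x) x := by
    intro x hx
    have hu : HasDerivWithinAt u ((-(F x (Z x))) - (-(F x (α x)))) (Ici x) x :=
      (hZda x hx).sub (hαda x hx)
    have hu2 : HasDerivWithinAt (fun y => u y^2)
        (2*u x*((-(F x (Z x))) - (-(F x (α x))))) (Ici x) x := by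
      have h3 := (hu.mul hu).congr_deriv
        (show (-(F x (Z x)) - -(F x (α x))) * u x + u x * (-(F x (Z x)) - -(F x (α x)))
          = 2*u x*((-(F x (Z x))) - (-(F x (α x)))) by ring)
      have h2 : (fun y => u y^2) = fun y => u y * u y := by
        funext y; ring
      rw [h2]
      exact h3
    have hE : HasDerivAt E (E x*(2*K)) x := by
      have h1 : HasDerivAt (fun y : ℝ => 2*K*y) (2*K) x := by
        simpa using (hasDerivAt_id x).const_mul (2*K)
      simpa [hEdef] using h1.exp
    exact hu2.mul hE.hasDerivWithinAt
  have hDnn : ∀ x ∈ Ico (0:ℝ) b, 0 ≤ D x := by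
    intro x hx
    have hxI : x ∈ Icc (0:ℝ) b := Ico_subset_Icc_self hx
    have hZx : θ^2*δ ≤ Z x := hZlb x hxI
    have hαx : θ^2*δ ≤ α x := hαlb x hxI
    have hFlip : |F x (Z x) - F x (α x)| ≤ K * |u x| := by
      have := coreLip (θ := θ) (c := θ^2*δ) (by positivity) (hann x hxI) (haA x hxI)
        (mem_Ici.2 hZx) (mem_Ici.2 hαx)
      exact this
    have hE0 : 0 < E x := Real.exp_pos _
    have h1 : -(K * u x^2) ≤ u x * (F x (α x) - F x (Z x)) := by
      nlinarith [neg_abs_le (u x * (F x (α x) - F x (Z x))),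
        abs_mul (u x) (F x (α x) - F x (Z x)), sq_abs (u x), abs_nonneg (u x),
        mul_le_mul_of_nonneg_left hFlip (abs_nonneg (u x)),
        abs_sub_comm (F x (Z x)) (F x (α x))]
    have hD : D x = E x * (2*(u x * (F x (α x) - F x (Z x))) + 2*K*u x^2) := by
      rw [hDdef]; ring
    rw [hD]
    apply mul_nonneg hE0.le
    nlinarith [h1]
  have hZα : ∀ s ∈ Icc (0:ℝ) b, Z s = α s := by
    intro s hs
    have hψc : ContinuousOn ψ (Icc s b) := by
      apply ContinuousOn.mul
      · exact (((hZcont.mono (Icc_subset_Icc hs.1 hbT.le)).sub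
          (hαcont.mono (Icc_subset_Icc hs.1 le_rfl))).pow 2)
      · exact (Real.continuous_exp.comp (continuous_const.mul continuous_id)).continuousOn
    have key := rightDeriv_nonpos_le (f := fun x => -ψ x) (f' := fun x => -D x)
      (p := s) (q := b) hψc.neg
      (fun x hx => (hψd x ⟨hs.1.trans hx.1, hx.2⟩).neg)
      (fun x hx => neg_nonpos.2 (hDnn x ⟨hs.1.trans hx.1, hx.2⟩))
    have h1 : -ψ b ≤ -ψ s := key b ⟨hs.2, le_rfl⟩
    have hub : u b = 0 := by
      show Z b - α b = 0
      rw [hZb, hαb, sub_self]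
    have hψb : ψ b = 0 := by
      show u b^2 * E b = 0
      rw [hub]
      ring
    have hψs : 0 ≤ ψ s := by
      show 0 ≤ u s^2 * E s
      positivity
    have hψ0 : ψ s = 0 := by linarith
    have hE0 : 0 < E s := Real.exp_pos _
    have hu0 : u s^2 = 0 := by
      by_contra hne
      have h2 : u s ^2 * E s ≠ 0 := mul_ne_zero hne hE0.ne'
      exact h2 hψ0
    have h3 : u s = 0 := sq_eq_zero_iff.1 hu0
    have h4 : Z s - α s = 0 := h3
    linarith
  intro t ht
  by_cases h : t ≤ b
  · rw [hYle t h]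
    exact hZα t ⟨ht.1, h⟩
  · rw [hY2 t ⟨(not_le.1 h).le, ht.2⟩]
    exact hZlin t ⟨(not_le.1 h).le, ht.2⟩
end
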